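/- arXiv:math/0111226 — 3 statements merged into one kernel-verified Lean document; each statement's English description precedes it below -/
import Mathlib

section
/- Let X and Y be locally compact Hausdorff spaces, and let f : X × Y → ℂ be a bounded function such that f(x, ·) ∈ C₀(Y) for each x ∈ X and f(·, y) ∈ C₀(X) for each y ∈ Y. Then for each regular Borel measure μ on X, the function y ↦ ∫_X f(x,y) dμ(x) belongs to C₀(Y). -/
open Filter Topology Set
open scoped ZeroAtInfty
set_option linter.unusedSectionVars false
set_option maxHeartbeats 1000000

namespace SepC0Proof

noncomputable def ulim {α : Type*} (l : Ultrafilter α) (φ : α → ℝ) : ℝ :=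
  limUnder l φ

theorem exists_tendsto_of_bounded {α : Type*} (l : Ultrafilter α) {φ : α → ℝ} {B : ℝ}
    (hB : ∀ x, |φ x| ≤ B) : ∃ z, Tendsto φ l (𝓝 z) := by
  have hmem : ↑(l.map φ) ≤ 𝓟 (Icc (-B) B) := by
    rw [le_principal_iff]
    refine Ultrafilter.mem_map.2 ?_
    have : φ ⁻¹' Icc (-B) B = univ := by
      ext x; simp [abs_le.1 (hB x), mem_Icc, (abs_le.1 (hB x)).1, (abs_le.1 (hB x)).2]
    rw [this]; exact Filter.univ_mem
  obtain ⟨z, -, hz⟩ := isCompact_Icc.ultrafilter_le_nhds (l.map φ) hmem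
  exact ⟨z, hz⟩

theorem tendsto_ulim {α : Type*} (l : Ultrafilter α) {φ : α → ℝ} {B : ℝ}
    (hB : ∀ x, |φ x| ≤ B) : Tendsto φ l (𝓝 (ulim l φ)) :=
  tendsto_nhds_limUnder (exists_tendsto_of_bounded l hB)

theorem ulim_le {α : Type*} {l : Ultrafilter α} {φ : α → ℝ} {B : ℝ}
    (hB : ∀ x, |φ x| ≤ B) {c : ℝ} (h : ∀ᶠ x in (l : Filter α), φ x ≤ c) :
    ulim l φ ≤ c :=
  le_of_tendsto (tendsto_ulim l hB) h

theorem le_ulim {α : Type*} {l : Ultrafilter α} {φ : α → ℝ} {B : ℝ}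
    (hB : ∀ x, |φ x| ≤ B) {c : ℝ} (h : ∀ᶠ x in (l : Filter α), c ≤ φ x) :
    c ≤ ulim l φ :=
  ge_of_tendsto (tendsto_ulim l hB) h

theorem eventually_ulim_close {α : Type*} (l : Ultrafilter α) {φ : α → ℝ} {B : ℝ}
    (hB : ∀ x, |φ x| ≤ B) {ε : ℝ} (hε : 0 < ε) :
    ∀ᶠ x in (l : Filter α), |φ x - ulim l φ| < ε := by
  have := Metric.tendsto_nhds.1 (tendsto_ulim l hB) ε hε
  simpa [Real.dist_eq] using this


set_option linter.unusedSectionVars false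

variable {T : Type*} [TopologicalSpace T] [CompactSpace T]

theorem pos_mono (p : C(T, ℝ) →ₗ[ℝ] ℝ) (hp : ∀ h : C(T, ℝ), 0 ≤ h → 0 ≤ p h)
    {h g : C(T, ℝ)} (hle : h ≤ g) : p h ≤ p g := by
  have := hp (g - h) (by
    rw [ContinuousMap.le_def] at hle ⊢
    intro a; simpa using hle a)
  have h2 : p (g - h) = p g - p h := by rw [map_sub]
  linarith [this, h2.symm.le]

theorem pos_abs (p : C(T, ℝ) →ₗ[ℝ] ℝ) (hp : ∀ h : C(T, ℝ), 0 ≤ h → 0 ≤ p h)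
    (h : C(T, ℝ)) : |p h| ≤ p |h| := by
  rw [abs_le]
  constructor
  · have := pos_mono p hp (h := -h) (g := |h|) (by
      rw [ContinuousMap.le_def]; intro a
      simpa using neg_le_abs (h a))
    rw [map_neg] at this; linarith
  · exact pos_mono p hp (by
      rw [ContinuousMap.le_def]; intro a
      simpa using le_abs_self (h a))

theorem pos_bound (p : C(T, ℝ) →ₗ[ℝ] ℝ) (hp : ∀ h : C(T, ℝ), 0 ≤ h → 0 ≤ p h)
    (h : C(T, ℝ)) : |p h| ≤ p 1 * ‖h‖ := by
  refine (pos_abs p hp h).trans ?_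
  have hle : (|h| : C(T,ℝ)) ≤ ‖h‖ • (1 : C(T,ℝ)) := by
    rw [ContinuousMap.le_def]; intro a
    simpa using (ContinuousMap.norm_coe_le_norm h a)
  calc p |h| ≤ p (‖h‖ • 1) := pos_mono p hp hle
    _ = ‖h‖ * p 1 := by rw [map_smul]; simp
    _ = p 1 * ‖h‖ := by ring

/-- Cauchy–Schwarz with nonnegative weight `w`:  `p (v*w) ^ 2 ≤ p (v*v*w) * p w`. -/
theorem pos_cauchy_schwarz (p : C(T, ℝ) →ₗ[ℝ] ℝ) (hp : ∀ h : C(T, ℝ), 0 ≤ h → 0 ≤ p h)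
    (v w : C(T, ℝ)) (hw : 0 ≤ w) :
    p (v * w) ^ 2 ≤ p (v * v * w) * p w := by
  have key : ∀ t : ℝ, 0 ≤ p w * (t * t) + (-2 * p (v * w)) * t + p (v * v * w) := by
    intro t
    have h0 : (0 : C(T,ℝ)) ≤ (v - t • 1) * (v - t • 1) * w := by
      rw [ContinuousMap.le_def]; intro a
      have hwa : (0:ℝ) ≤ w a := by
        have := (ContinuousMap.le_def.1 hw) a; simpa using this
      simp only [ContinuousMap.zero_apply, ContinuousMap.mul_apply]
      nlinarith [sq_nonneg ((v - t • 1) a)]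
    have hexp : (v - t • 1) * (v - t • 1) * w
        = v * v * w - (2 * t) • (v * w) + (t * t) • w := by
      ext a
      simp only [ContinuousMap.mul_apply, ContinuousMap.smul_apply, ContinuousMap.sub_apply,
        ContinuousMap.add_apply, ContinuousMap.one_apply, smul_eq_mul]
      ring
    have hval := hp _ h0
    rw [hexp, map_add, map_sub, map_smul, map_smul] at hval
    simp only [smul_eq_mul] at hval
    nlinarith
  have hdisc := discrim_le_zero key
  rw [discrim] at hdisc
  nlinarith


section Averaging

variable {T : Type*} [TopologicalSpace T] [CompactSpace T]
variable {S : Type*}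

/-- Values of `p` on `[0,1]`-functions lie in `[0, p 1]`. -/
theorem pval_mem (p : C(T, ℝ) →ₗ[ℝ] ℝ) (hp : ∀ h : C(T, ℝ), 0 ≤ h → 0 ≤ p h)
    {g : C(T, ℝ)} (hg0 : 0 ≤ g) (hg1 : g ≤ 1) : 0 ≤ p g ∧ p g ≤ p 1 :=
  ⟨hp g hg0, pos_mono p hp hg1⟩

theorem pval_abs_le (p : C(T, ℝ) →ₗ[ℝ] ℝ) (hp : ∀ h : C(T, ℝ), 0 ≤ h → 0 ≤ p h)
    {g : C(T, ℝ)} (hg0 : 0 ≤ g) (hg1 : g ≤ 1) : |p g| ≤ p 1 := by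
  obtain ⟨h1, h2⟩ := pval_mem p hp hg0 hg1
  rw [abs_of_nonneg h1]; exact h2

theorem mul01_nonneg {a b : C(T, ℝ)} (ha0 : 0 ≤ a) (hb0 : 0 ≤ b) : 0 ≤ a * b := by
  rw [ContinuousMap.le_def] at ha0 hb0 ⊢
  intro t
  simpa using mul_nonneg (by simpa using ha0 t) (by simpa using hb0 t)

theorem mul01_le_one {a b : C(T, ℝ)} (ha0 : 0 ≤ a) (ha1 : a ≤ 1) (hb0 : 0 ≤ b)
    (hb1 : b ≤ 1) : a * b ≤ 1 := by
  rw [ContinuousMap.le_def] at ha0 ha1 hb0 hb1 ⊢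
  intro t
  have := mul_le_one₀ (by simpa using ha1 t) (by simpa using hb0 t) (by simpa using hb1 t)
  simpa using this

theorem mul_le_left01 {a b : C(T, ℝ)} (ha0 : 0 ≤ a) (hb0 : 0 ≤ b) (hb1 : b ≤ 1) :
    a * b ≤ a := by
  rw [ContinuousMap.le_def] at ha0 hb0 hb1 ⊢
  intro t
  simpa using mul_le_of_le_one_right (by simpa using ha0 t) (by simpa using hb1 t)

/-- The key averaging (log-convexity) inequality for the persistence chain. -/
theorem averaging (p : C(T, ℝ) →ₗ[ℝ] ℝ) (hp : ∀ h : C(T, ℝ), 0 ≤ h → 0 ≤ p h)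
    (l : Ultrafilter S) (u : S → C(T, ℝ)) (hu0 : ∀ s, 0 ≤ u s) (hu1 : ∀ s, u s ≤ 1)
    (W : C(T, ℝ)) (hW0 : 0 ≤ W) (hW1 : W ≤ 1) :
    (ulim l fun s => p (W * u s)) ^ 2
      ≤ p W * ulim l fun s => ulim l fun s' => p (W * u s * u s') := by
  classical
  set B := p 1 with hB
  have hB0 : 0 ≤ B := hp 1 zero_le_one
  -- basic membership facts
  have hWu0 : ∀ s, 0 ≤ W * u s := fun s => mul01_nonneg hW0 (hu0 s)
  have hWu1 : ∀ s, W * u s ≤ 1 := fun s => mul01_le_one hW0 hW1 (hu0 s) (hu1 s)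
  have hWuu0 : ∀ s s', 0 ≤ W * u s * u s' := fun s s' => mul01_nonneg (hWu0 s) (hu0 s')
  have hWuu1 : ∀ s s', W * u s * u s' ≤ 1 := fun s s' =>
    mul01_le_one (hWu0 s) (hWu1 s) (hu0 s') (hu1 s')
  have hbdd1 : ∀ s, |p (W * u s)| ≤ B := fun s => pval_abs_le p hp (hWu0 s) (hWu1 s)
  have hbdd2 : ∀ s s', |p (W * u s * u s')| ≤ B := fun s s' =>
    pval_abs_le p hp (hWuu0 s s') (hWuu1 s s')
  set m0 := p W with hm0
  set m1 := ulim l (fun s => p (W * u s)) with hm1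
  set Mf : S → ℝ := fun s => ulim l fun s' => p (W * u s * u s') with hMf
  have hbddM : ∀ s, |Mf s| ≤ B := by
    intro s
    rw [abs_le]
    constructor
    · exact le_ulim (hbdd2 s) (Filter.Eventually.of_forall fun s' =>
        (neg_nonpos.2 hB0).trans (hp _ (hWuu0 s s')))
    · exact ulim_le (hbdd2 s) (Filter.Eventually.of_forall fun s' =>
        (pval_mem p hp (hWuu0 s s') (hWuu1 s s')).2)
  set m2 := ulim l Mf with hm2
  have hm00 : 0 ≤ m0 := hp W hW0
  have hm0B : m0 ≤ B := pos_mono p hp hW1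
  have hm10 : 0 ≤ m1 := le_ulim hbdd1 (Filter.Eventually.of_forall fun s => hp _ (hWu0 s))
  have hm1B : m1 ≤ B := ulim_le hbdd1 (Filter.Eventually.of_forall fun s =>
    (pval_mem p hp (hWu0 s) (hWu1 s)).2)
  have hm20 : 0 ≤ m2 := le_ulim hbddM (Filter.Eventually.of_forall fun s =>
    le_ulim (hbdd2 s) (Filter.Eventually.of_forall fun s' => hp _ (hWuu0 s s')))
  have hm2B : m2 ≤ B := ulim_le hbddM (Filter.Eventually.of_forall fun s => (abs_le.1 (hbddM s)).2)
  -- the key finite-sample estimate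
  have key : ∀ (k : ℕ), 0 < k → ∀ γ : ℝ, 0 < γ →
      (m1 - γ) ^ 2 ≤ m0 * m0 / k + (m2 + 2 * γ) * m0 ∨ m1 - γ < 0 := by
    intro k hk γ hγ
    by_cases hneg : m1 - γ < 0
    · exact Or.inr hneg
    push_neg at hneg
    left
    -- build the sample
    have hsample : ∀ n : ℕ, ∃ s : Fin n → S,
        (∀ i, m1 - γ ≤ p (W * u (s i))) ∧ (∀ i, |Mf (s i) - m2| < γ) ∧
        (∀ i j, i < j → p (W * u (s i) * u (s j)) ≤ m2 + 2 * γ) := by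
      intro n
      induction n with
      | zero => exact ⟨Fin.elim0, fun i => i.elim0, fun i => i.elim0, fun i => i.elim0⟩
      | succ n ih =>
        obtain ⟨s, hs1, hs2, hs3⟩ := ih
        have hGood : ({σ | m1 - γ ≤ p (W * u σ)} ∩ {σ | |Mf σ - m2| < γ} ∩
            ⋂ i : Fin n, {σ | p (W * u (s i) * u σ) ≤ Mf (s i) + γ}) ∈ l := by
          refine Filter.inter_mem (Filter.inter_mem ?_ ?_) ?_
          · refine Filter.mem_of_superset (eventually_ulim_close l hbdd1 hγ) ?_
            intro σ hσ
            simp only [mem_setOf_eq] at hσ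
            have := abs_lt.1 hσ
            simp only [mem_setOf_eq]
            linarith [this.1]
          · exact eventually_ulim_close l hbddM hγ
          · rw [Filter.iInter_mem]
            intro i
            refine Filter.mem_of_superset (eventually_ulim_close l (hbdd2 (s i)) hγ) ?_
            intro σ hσ
            simp only [mem_setOf_eq] at hσ
            have := abs_lt.1 hσ
            simp only [mem_setOf_eq]
            linarith [this.2]
        obtain ⟨σ, hσ⟩ := Ultrafilter.nonempty_of_mem hGood
        obtain ⟨⟨hσ1, hσ2⟩, hσ3⟩ := hσ
        refine ⟨Fin.snoc s σ, ?_, ?_, ?_⟩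
        · intro i
          cases i using Fin.lastCases with
          | last => simpa [Fin.snoc_last] using hσ1
          | cast i => simpa [Fin.snoc_castSucc] using hs1 i
        · intro i
          cases i using Fin.lastCases with
          | last => simpa [Fin.snoc_last] using hσ2
          | cast i => simpa [Fin.snoc_castSucc] using hs2 i
        · intro i j hij
          cases j using Fin.lastCases with
          | last =>
            cases i using Fin.lastCases with
            | last => exact absurd hij (lt_irrefl _)
            | cast i =>
              have hmem := mem_iInter.1 hσ3 i
              simp only [mem_setOf_eq] at hmem
              have hMi := abs_lt.1 (hs2 i)
              simp only [Fin.snoc_castSucc, Fin.snoc_last]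
              linarith [hmem, hMi.2]
          | cast j =>
            cases i using Fin.lastCases with
            | last =>
              exfalso
              exact absurd ((Fin.castSucc_lt_last j).trans_le (le_of_lt hij)) (lt_irrefl _).elim
            | cast i =>
              have hij2 : i < j := by
                rwa [Fin.castSucc_lt_castSucc_iff] at hij
              simpa [Fin.snoc_castSucc] using hs3 i j hij2
    obtain ⟨s, hs1, hs2, hs3⟩ := hsample k
    set v : C(T, ℝ) := ∑ i : Fin k, u (s i) with hv
    have hCS := pos_cauchy_schwarz p hp v W hW0
    have hvW : p (v * W) = ∑ i : Fin k, p (W * u (s i)) := by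
      rw [hv, Finset.sum_mul, map_sum]
      congr 1
      ext i
      rw [mul_comm]
    have hlow : (k : ℝ) * (m1 - γ) ≤ p (v * W) := by
      rw [hvW]
      calc (k : ℝ) * (m1 - γ) = ∑ _i : Fin k, (m1 - γ) := by
            simp [Finset.sum_const, nsmul_eq_mul]
            ring
        _ ≤ ∑ i : Fin k, p (W * u (s i)) := Finset.sum_le_sum fun i _ => hs1 i
    have hvvW : p (v * v * W) = ∑ i : Fin k, ∑ j : Fin k, p (W * u (s i) * u (s j)) := by
      rw [hv, Finset.sum_mul_sum, Finset.sum_mul, map_sum]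
      congr 1
      ext i
      rw [Finset.sum_mul, map_sum]
      congr 1
      ext j
      congr 1
      ext t
      simp only [ContinuousMap.mul_apply]
      ring
    have hterm : ∀ i j : Fin k, p (W * u (s i) * u (s j)) ≤
        if i = j then m0 else m2 + 2 * γ := by
      intro i j
      by_cases hij : i = j
      · subst hij
        simp only [if_pos rfl]
        refine pos_mono p hp ?_
        exact (mul_le_left01 (hWu0 (s i)) (hu0 (s i)) (hu1 (s i))).trans
          (mul_le_left01 hW0 (hu0 (s i)) (hu1 (s i)))
      · simp only [if_neg hij]
        rcases lt_or_gt_of_ne hij with h | h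
        · exact hs3 i j h
        · have := hs3 j i h
          calc p (W * u (s i) * u (s j)) = p (W * u (s j) * u (s i)) := by
                congr 1; ext t; simp only [ContinuousMap.mul_apply]; ring
            _ ≤ m2 + 2 * γ := this
    have hup : p (v * v * W) ≤ (k : ℝ) * m0 + ((k : ℝ) * (k : ℝ) - (k : ℝ)) * (m2 + 2 * γ) := by
      rw [hvvW]
      have h2γ : 0 ≤ m2 + 2 * γ := by linarith
      calc (∑ i : Fin k, ∑ j : Fin k, p (W * u (s i) * u (s j)))
          ≤ ∑ i : Fin k, ∑ j : Fin k, (if i = j then m0 else m2 + 2 * γ) :=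
            Finset.sum_le_sum fun i _ => Finset.sum_le_sum fun j _ => hterm i j
        _ = ∑ _i : Fin k, (m0 + ((k : ℝ) - 1) * (m2 + 2 * γ)) := by
            refine Finset.sum_congr rfl fun i _ => ?_
            have : ∀ j : Fin k, (if i = j then m0 else m2 + 2 * γ)
                = (m2 + 2 * γ) + (if i = j then m0 - (m2 + 2 * γ) else 0) := by
              intro j; by_cases h : i = j <;> simp [h]
            rw [Finset.sum_congr rfl fun j _ => this j, Finset.sum_add_distrib]
            rw [Finset.sum_ite_eq]
            simp [Finset.sum_const, nsmul_eq_mul]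
            ring
        _ = (k : ℝ) * (m0 + ((k : ℝ) - 1) * (m2 + 2 * γ)) := by
            simp [Finset.sum_const, nsmul_eq_mul]
            ring
        _ ≤ (k : ℝ) * m0 + ((k : ℝ) * (k : ℝ) - (k : ℝ)) * (m2 + 2 * γ) := le_of_eq (by ring)
    -- combine
    have hk0 : (0 : ℝ) < k := by exact_mod_cast hk
    have hsq : ((k : ℝ) * (m1 - γ)) ^ 2 ≤ p (v * v * W) * m0 := by
      calc ((k : ℝ) * (m1 - γ)) ^ 2 ≤ (p (v * W)) ^ 2 := by
            have h1 : 0 ≤ (k : ℝ) * (m1 - γ) := mul_nonneg hk0.le hneg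
            exact pow_le_pow_left₀ h1 hlow 2
        _ ≤ p (v * v * W) * m0 := hCS
    have := hsq.trans (mul_le_mul_of_nonneg_right hup hm00)
    have hfin : (k : ℝ) ^ 2 * ((m1 - γ) ^ 2) ≤ (k:ℝ)^2 * (m0 * m0 / k + (m2 + 2*γ) * m0) := by
      have hexp : ((k : ℝ) * m0 + ((k : ℝ) * (k : ℝ) - (k : ℝ)) * (m2 + 2 * γ)) * m0
          ≤ (k:ℝ)^2 * (m0 * m0 / k + (m2 + 2*γ) * m0) := by
        rw [mul_comm ((k:ℝ)^2) _]
        have hdiv : (k:ℝ)^2 * (m0 * m0 / k) = (k:ℝ) * (m0 * m0) := by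
          field_simp
        have h2γ : 0 ≤ m2 + 2 * γ := by linarith
        nlinarith [mul_nonneg h2γ hm00, hk0]
      calc (k : ℝ) ^ 2 * ((m1 - γ) ^ 2) = ((k : ℝ) * (m1 - γ)) ^ 2 := by ring
        _ ≤ ((k : ℝ) * m0 + ((k : ℝ) * (k : ℝ) - (k : ℝ)) * (m2 + 2 * γ)) * m0 := this
        _ ≤ (k:ℝ)^2 * (m0 * m0 / k + (m2 + 2*γ) * m0) := hexp
    have hk2 : (0:ℝ) < (k:ℝ)^2 := by positivity
    exact le_of_mul_le_mul_left (by linarith [hfin]) hk2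
  -- conclude by letting k → ∞, γ → 0
  by_contra hcon
  push_neg at hcon
  set d := m1 ^ 2 - m0 * m2 with hd
  have hd0 : 0 < d := by rw [hd]; linarith
  set γ := min (d / (16 * B + 16)) (1 : ℝ) with hγdef
  have hγ0 : 0 < γ := by
    apply lt_min
    · positivity
    · norm_num
  have hγ1 : γ ≤ 1 := min_le_right _ _
  have hγd : γ ≤ d / (16 * B + 16) := min_le_left _ _
  obtain ⟨k, hk⟩ := exists_nat_gt (max 1 (4 * B ^ 2 / d * 4))
  have hk1 : 0 < k := by
    have := (le_max_left 1 _).trans_lt hk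
    exact_mod_cast lt_of_lt_of_le zero_lt_one this.le
  rcases key k hk1 γ hγ0 with h | h
  · have hkd : m0 * m0 / k ≤ d / 4 := by
      have hkk : (4 * B ^ 2 / d * 4) < k := (le_max_right _ _).trans_lt hk
      have hk0 : (0:ℝ) < k := by exact_mod_cast hk1
      rw [div_le_iff₀ hk0]
      have hm0sq : m0 * m0 ≤ B ^ 2 := by nlinarith
      have hident : d / 4 * (4 * B ^ 2 / d * 4) = 4 * B ^ 2 := by
        field_simp
      have hmono : d / 4 * (4 * B ^ 2 / d * 4) ≤ d / 4 * (k : ℝ) :=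
        mul_le_mul_of_nonneg_left hkk.le (by positivity)
      nlinarith [sq_nonneg B]
    have hγB : 2 * γ * m0 + 2 * γ * m1 ≤ d / 4 := by
      have h1 : γ * (16 * B + 16) ≤ d := by
        rw [← le_div_iff₀ (by positivity)]
        exact hγd
      nlinarith
    nlinarith [sq_nonneg (m1 - γ)]
  · -- m1 < γ
    have : m1 ^ 2 < γ := by
      have : m1 < γ := by linarith
      nlinarith
    have hγsmall : γ ≤ d / 16 := by
      have hB16 : (16:ℝ) ≤ 16 * B + 16 := by linarith
      calc γ ≤ d / (16 * B + 16) := hγd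
        _ ≤ d / 16 := by
            apply div_le_div_of_nonneg_left hd0.le (by norm_num) hB16
    nlinarith [mul_nonneg hm00 hm20]

end Averaging


section Clamp

variable {T : Type*} [TopologicalSpace T] [CompactSpace T]

/-- `uAux δ g = min 1 (max 0 ((2/δ) * (|g| - δ/2)))` as a continuous map. -/
noncomputable def uAux (δ : ℝ) (g : C(T, ℝ)) : C(T, ℝ) :=
  1 ⊓ (0 ⊔ ((2 / δ) • (|g| - (δ / 2) • (1 : C(T, ℝ)))))

theorem uAux_apply (δ : ℝ) (g : C(T, ℝ)) (t : T) :
    uAux δ g t = min 1 (max 0 ((2 / δ) * (|g t| - δ / 2))) := by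
  simp [uAux, ContinuousMap.inf_apply, ContinuousMap.sup_apply, ContinuousMap.abs_apply]

theorem uAux_nonneg (δ : ℝ) (g : C(T, ℝ)) : 0 ≤ uAux δ g := by
  rw [ContinuousMap.le_def]
  intro t
  rw [ContinuousMap.zero_apply, uAux_apply]
  exact le_min zero_le_one (le_max_left _ _)

theorem uAux_le_one (δ : ℝ) (g : C(T, ℝ)) : uAux δ g ≤ 1 := by
  rw [ContinuousMap.le_def]
  intro t
  rw [ContinuousMap.one_apply, uAux_apply]
  exact min_le_left _ _

theorem uAux_pos {δ : ℝ} (hδ : 0 < δ) (g : C(T, ℝ)) {t : T} (h : 0 < uAux δ g t) :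
    δ / 2 < |g t| := by
  rw [uAux_apply] at h
  have h1 : 0 < max 0 ((2 / δ) * (|g t| - δ / 2)) := lt_min_iff.1 h |>.2
  have h2 : 0 < (2 / δ) * (|g t| - δ / 2) := by
    rcases le_or_gt ((2 / δ) * (|g t| - δ / 2)) 0 with hc | hc
    · rw [max_eq_left hc] at h1; exact absurd h1 (lt_irrefl _)
    · exact hc
  have h3 : 0 < 2 / δ := by positivity
  nlinarith

theorem uAux_key {δ C' : ℝ} (hδ : 0 < δ) (g : C(T, ℝ)) (hg : ∀ t, |g t| ≤ 2 * C')
    (t : T) : |g t| ≤ δ + 2 * C' * uAux δ g t := by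
  rcases le_or_gt (|g t|) δ with hc | hc
  · have h0 : 0 ≤ uAux δ g t := by
      have := uAux_nonneg δ g
      rw [ContinuousMap.le_def] at this
      simpa using this t
    have hC0 : 0 ≤ 2 * C' := le_trans (abs_nonneg _) (hg t)
    nlinarith
  · have h1 : (1 : ℝ) ≤ (2 / δ) * (|g t| - δ / 2) := by
      have h3 : (0:ℝ) < 2 / δ := by positivity
      have h4 : δ / 2 ≤ |g t| - δ / 2 := by linarith
      calc (1 : ℝ) = (2 / δ) * (δ / 2) := by field_simp
        _ ≤ (2 / δ) * (|g t| - δ / 2) := mul_le_mul_of_nonneg_left h4 h3.le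
    have : uAux δ g t = 1 := by
      rw [uAux_apply, max_eq_right (le_trans zero_le_one h1), min_eq_left h1]
    rw [this]
    have := hg t
    linarith

end Clamp

section BSeq

/-- the lower bounds for the persistence chain -/
noncomputable def bSeq (e m : ℝ) : ℕ → ℝ := fun r => Nat.rec e (fun _ x => x ^ 2 / (2 * m)) r

@[simp] theorem bSeq_zero (e m : ℝ) : bSeq e m 0 = e := rfl

@[simp] theorem bSeq_succ (e m : ℝ) (r : ℕ) : bSeq e m (r + 1) = (bSeq e m r) ^ 2 / (2 * m) :=
  rfl

theorem bSeq_pos {e m : ℝ} (he : 0 < e) (hm : 0 < m) : ∀ r, 0 < bSeq e m r := by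
  intro r
  induction r with
  | zero => simpa using he
  | succ n ih => rw [bSeq_succ]; positivity

end BSeq


section Heart

theorem mul_le_right01 {T : Type*} [TopologicalSpace T] {a b : C(T, ℝ)} (ha0 : 0 ≤ a)
    (ha1 : a ≤ 1) (hb0 : 0 ≤ b) : a * b ≤ b := by
  rw [ContinuousMap.le_def] at ha0 ha1 hb0 ⊢
  intro t
  simpa using mul_le_of_le_one_left (by simpa using hb0 t) (by simpa using ha1 t)

variable {T S : Type*} [TopologicalSpace T] [CompactSpace T]
  [TopologicalSpace S] [CompactSpace S]

theorem heart (p : C(T, ℝ) →ₗ[ℝ] ℝ) (hp : ∀ h : C(T, ℝ), 0 ≤ h → 0 ≤ p h)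
    (row : S → C(T, ℝ)) (col : T → C(S, ℝ)) (hcomp : ∀ t s, row s t = col t s)
    (C : ℝ) (hC : ∀ s t, |row s t| ≤ C) :
    Continuous fun s => p (row s) := by
  classical
  rw [continuous_iff_continuousAt]
  intro η
  by_contra hcont
  rw [ContinuousAt, Metric.tendsto_nhds] at hcont
  push_neg at hcont
  obtain ⟨ε, hε, hfreq⟩ := hcont
  set bad : Set S := {s | ε ≤ |p (row s) - p (row η)|} with hbad
  have hfreq' : ∃ᶠ s in 𝓝 η, s ∈ bad := by
    refine hfreq.mono fun s hs => ?_
    rw [hbad, Set.mem_setOf_eq]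
    rw [Real.dist_eq] at hs
    linarith [hs]
  have hneb : (𝓝 η ⊓ Filter.principal bad).NeBot := by
    rw [Filter.inf_principal_neBot_iff]
    intro U hU
    exact Filter.frequently_iff.1 hfreq' hU
  set l : Ultrafilter S := Ultrafilter.of (𝓝 η ⊓ Filter.principal bad) with hldef
  have hlle : (l : Filter S) ≤ 𝓝 η ⊓ Filter.principal bad := Ultrafilter.of_le _
  have hlη : (l : Filter S) ≤ 𝓝 η := hlle.trans inf_le_left
  have hlbad : bad ∈ l := hlle (Filter.mem_inf_of_right (Filter.mem_principal_self bad))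
  have hp1 : 0 ≤ p 1 := hp 1 zero_le_one
  rcases eq_or_lt_of_le hp1 with hp10 | hp1pos
  · have hz : ∀ h : C(T, ℝ), p h = 0 := by
      intro h
      have hb := pos_bound p hp h
      rw [← hp10] at hb
      simp only [zero_mul] at hb
      exact abs_eq_zero.1 (le_antisymm hb (abs_nonneg _))
    obtain ⟨s, hs⟩ := Ultrafilter.nonempty_of_mem hlbad
    rw [hbad, Set.mem_setOf_eq, hz, hz] at hs
    simp at hs
    linarith
  -- main case
  set m := p 1 with hm
  set δ := ε / (2 * (m + 1)) with hδdef
  have hm0 : 0 < m := hp1pos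
  have hδ0 : 0 < δ := by
    rw [hδdef]; positivity
  set C' := |C| + 1 with hC'def
  have hC'0 : 0 < C' := by rw [hC'def]; positivity
  have hwbound : ∀ s t, |row s t - row η t| ≤ 2 * C' := by
    intro s t
    have h1 := hC s t
    have h2 := hC η t
    have h3 : C ≤ |C| := le_abs_self C
    have h4 := abs_sub (row s t) (row η t)
    rw [hC'def]
    linarith
  set u : S → C(T, ℝ) := fun s => uAux δ (row s - row η) with hudef
  have hu0 : ∀ s, 0 ≤ u s := fun s => uAux_nonneg δ _
  have hu1 : ∀ s, u s ≤ 1 := fun s => uAux_le_one δ _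
  have hsub_apply : ∀ s t, (row s - row η) t = row s t - row η t := fun s t => rfl
  have hupos : ∀ s t, 0 < u s t → δ / 2 < |row s t - row η t| := by
    intro s t h
    have := uAux_pos hδ0 (row s - row η) (t := t) h
    rwa [hsub_apply] at this
  have hukey : ∀ s t, |row s t - row η t| ≤ δ + 2 * C' * u s t := by
    intro s t
    have := uAux_key hδ0 (row s - row η) (fun t' => by rw [hsub_apply]; exact hwbound s t') t
    rwa [hsub_apply] at this
  set ε₀ := (ε - δ * m) / (2 * C') with hε₀def
  have hδm : δ * m ≤ ε / 2 := by
    rw [hδdef]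
    rw [div_mul_eq_mul_div, div_le_div_iff₀ (by positivity) (by norm_num)]
    nlinarith
  have hε₀ : 0 < ε₀ := by
    rw [hε₀def]
    have : 0 < ε - δ * m := by linarith
    positivity
  have hpu : ∀ s ∈ bad, ε₀ ≤ p (u s) := by
    intro s hs
    rw [hbad, Set.mem_setOf_eq] at hs
    have h1 : ε ≤ |p (row s - row η)| := by rwa [map_sub]
    have h2 : |p (row s - row η)| ≤ p |row s - row η| := pos_abs p hp _
    have h3 : (|row s - row η| : C(T, ℝ)) ≤ δ • (1 : C(T,ℝ)) + (2 * C') • u s := by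
      rw [ContinuousMap.le_def]
      intro t
      have hk := hukey s t
      simp only [ContinuousMap.abs_apply, ContinuousMap.add_apply, ContinuousMap.smul_apply,
        ContinuousMap.one_apply, smul_eq_mul, hsub_apply]
      linarith [hk]
    have h4 : p |row s - row η| ≤ δ * m + 2 * C' * p (u s) := by
      have h5 := pos_mono p hp h3
      rwa [map_add, map_smul, map_smul, smul_eq_mul, smul_eq_mul, ← hm] at h5
    rw [hε₀def, div_le_iff₀ (by positivity)]
    nlinarith
  have hTne : Nonempty T := by
    by_contra hT
    rw [not_nonempty_iff] at hT
    have h1 : (1 : C(T, ℝ)) = 0 := by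
      ext t
      exact (hT.false t).elim
    rw [hm, h1, map_zero] at hm0
    exact lt_irrefl 0 hm0
  obtain ⟨t0⟩ := hTne
  obtain ⟨s0⟩ : Nonempty S := ⟨(Ultrafilter.nonempty_of_mem hlbad).choose⟩
  set b : ℕ → ℝ := bSeq ε₀ m with hbdef
  have hbpos : ∀ r, 0 < b r := bSeq_pos hε₀ hm0
  -- bounds for ulim existence
  have hB1 : ∀ (W : C(T, ℝ)), 0 ≤ W → W ≤ 1 → ∀ s, |p (W * u s)| ≤ m := fun W h0 h1 s =>
    pval_abs_le p hp (mul01_nonneg h0 (hu0 s)) (mul01_le_one h0 h1 (hu0 s) (hu1 s))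
  have hBM : ∀ (W : C(T, ℝ)), 0 ≤ W → W ≤ 1 →
      ∀ σ, |ulim l fun s' => p (W * u σ * u s')| ≤ m := by
    intro W h0 h1 σ
    have hWu0 : 0 ≤ W * u σ := mul01_nonneg h0 (hu0 σ)
    have hWu1 : W * u σ ≤ 1 := mul01_le_one h0 h1 (hu0 σ) (hu1 σ)
    rw [abs_le]
    constructor
    · refine le_ulim (hB1 (W * u σ) hWu0 hWu1) (Filter.Eventually.of_forall fun s' => ?_)
      have := hp _ (mul01_nonneg hWu0 (hu0 s'))
      linarith [hm0.le]
    · exact ulim_le (hB1 (W * u σ) hWu0 hWu1) (Filter.Eventually.of_forall fun s' =>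
        (pval_mem p hp (mul01_nonneg hWu0 (hu0 s')) (mul01_le_one hWu0 hWu1 (hu0 s') (hu1 s'))).2)
  -- the step existence, with trivial fallback
  have hstep : ∀ (d : (ℕ → S) × (ℕ → T) × C(T, ℝ)) (n : ℕ),
      ∃ d' : (ℕ → S) × (ℕ → T) × C(T, ℝ),
        (((0 ≤ d.2.2 ∧ d.2.2 ≤ 1) ∧
          (∀ j, j < n → d.2.2 ≤ u (d.1 j)) ∧
          (b n ≤ ulim l fun s => p (d.2.2 * u s)) ∧
          (∀ i j, i < j → j < n → |col (d.2.1 i) (d.1 j) - col (d.2.1 i) η| < 1 / ((j : ℝ) + 1)) ∧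
          (∀ i j, j ≤ i → i < n → 0 < u (d.1 j) (d.2.1 i))) →
        ((∀ j, j < n → d'.1 j = d.1 j) ∧ (∀ i, i < n → d'.2.1 i = d.2.1 i) ∧
          ((0 ≤ d'.2.2 ∧ d'.2.2 ≤ 1) ∧
          (∀ j, j < n + 1 → d'.2.2 ≤ u (d'.1 j)) ∧
          (b (n + 1) ≤ ulim l fun s => p (d'.2.2 * u s)) ∧
          (∀ i j, i < j → j < n + 1 →
            |col (d'.2.1 i) (d'.1 j) - col (d'.2.1 i) η| < 1 / ((j : ℝ) + 1)) ∧
          (∀ i j, j ≤ i → i < n + 1 → 0 < u (d'.1 j) (d'.2.1 i))))) := by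
    intro d n
    by_cases hInv : (0 ≤ d.2.2 ∧ d.2.2 ≤ 1) ∧
        (∀ j, j < n → d.2.2 ≤ u (d.1 j)) ∧
        (b n ≤ ulim l fun s => p (d.2.2 * u s)) ∧
        (∀ i j, i < j → j < n → |col (d.2.1 i) (d.1 j) - col (d.2.1 i) η| < 1 / ((j : ℝ) + 1)) ∧
        (∀ i j, j ≤ i → i < n → 0 < u (d.1 j) (d.2.1 i))
    swap
    · exact ⟨d, fun h => absurd h hInv⟩
    obtain ⟨ys, xs, W⟩ := d
    obtain ⟨⟨hW0, hW1⟩, hi1, hi2, hi3, hi4⟩ := hInv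
    simp only at hW0 hW1 hi1 hi2 hi3 hi4 ⊢
    have hcnle : ulim l (fun s => p (W * u s)) ≤ p W := by
      refine ulim_le (hB1 W hW0 hW1) (Filter.Eventually.of_forall fun s => ?_)
      exact pos_mono p hp (mul_le_left01 hW0 (hu0 s) (hu1 s))
    have hpWpos : 0 < p W := lt_of_lt_of_le (lt_of_lt_of_le (hbpos n) hi2) hcnle
    have hpWlem : p W ≤ m := by
      rw [hm]; exact pos_mono p hp hW1
    have havg := averaging p hp l u hu0 hu1 W hW0 hW1
    have hcn2 : (b n) ^ 2 ≤ (ulim l fun s => p (W * u s)) ^ 2 :=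
      pow_le_pow_left₀ (hbpos n).le hi2 2
    have hM2low : (b n) ^ 2 / m ≤ ulim l fun s => ulim l fun s' => p (W * u s * u s') := by
      have h2 : (ulim l fun s => p (W * u s)) ^ 2 / p W
          ≤ ulim l fun s => ulim l fun s' => p (W * u s * u s') := by
        rw [div_le_iff₀ hpWpos]
        calc (ulim l fun s => p (W * u s)) ^ 2
            ≤ p W * ulim l fun s => ulim l fun s' => p (W * u s * u s') := havg
          _ = (ulim l fun s => ulim l fun s' => p (W * u s * u s')) * p W := by ring
      calc (b n) ^ 2 / m ≤ (ulim l fun s => p (W * u s)) ^ 2 / p W :=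
            div_le_div₀ (sq_nonneg _) hcn2 hpWpos hpWlem
        _ ≤ _ := h2
    have hg1 : {σ | b n / 2 < p (W * u σ)} ∈ l := by
      refine Filter.mem_of_superset
        (eventually_ulim_close l (hB1 W hW0 hW1) (show (0:ℝ) < b n / 2 by linarith [hbpos n])) ?_
      intro σ hσ
      simp only [Set.mem_setOf_eq] at hσ ⊢
      have := abs_lt.1 hσ
      linarith [hi2, this.1]
    have hg2 : {σ | b (n + 1) < ulim l fun s' => p (W * u σ * u s')} ∈ l := by
      have hbn1 : b (n + 1) = (b n) ^ 2 / (2 * m) := by rw [hbdef, bSeq_succ]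
      have hgap : 0 < (ulim l fun s => ulim l fun s' => p (W * u s * u s')) - b (n + 1) := by
        rw [hbn1]
        have h1 : (b n) ^ 2 / (2 * m) < (b n) ^ 2 / m :=
          div_lt_div_of_pos_left (pow_pos (hbpos n) 2) hm0 (by linarith)
        linarith [hM2low]
      refine Filter.mem_of_superset (eventually_ulim_close l (hBM W hW0 hW1) hgap) ?_
      intro σ hσ
      simp only [Set.mem_setOf_eq] at hσ ⊢
      have := abs_lt.1 hσ
      linarith [this.1]
    have hg3 : (⋂ i : Fin n, {σ | |col (xs i) σ - col (xs i) η| < 1 / ((n : ℝ) + 1)}) ∈ l := by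
      rw [← Ultrafilter.mem_coe, Filter.iInter_mem]
      intro i
      have hball : {σ | |col (xs (i : ℕ)) σ - col (xs (i : ℕ)) η| < 1 / ((n : ℝ) + 1)} ∈ 𝓝 η := by
        have hc := (col (xs (i : ℕ))).continuous.tendsto η
        have := hc (Metric.ball_mem_nhds (col (xs (i : ℕ)) η)
          (show (0:ℝ) < 1 / ((n : ℝ) + 1) by positivity))
        refine Filter.mem_of_superset this ?_
        intro σ hσ
        simpa [Metric.mem_ball, Real.dist_eq] using hσ
      exact hlη hball
    obtain ⟨σ, hσmem⟩ := Ultrafilter.nonempty_of_mem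
      (Filter.inter_mem (Filter.inter_mem hg1 hg2) hg3)
    obtain ⟨⟨hσ1, hσ2⟩, hσ3⟩ := hσmem
    simp only [Set.mem_setOf_eq] at hσ1 hσ2
    have hq : 0 < p (W * u σ) := lt_trans (by linarith [hbpos n]) hσ1
    have hτex : ∃ t, 0 < (W * u σ) t := by
      by_contra hcon
      push_neg at hcon
      have hzero : W * u σ = 0 := by
        apply le_antisymm
        · rw [ContinuousMap.le_def]
          intro t
          simpa using hcon t
        · exact mul01_nonneg hW0 (hu0 σ)
      rw [hzero, map_zero] at hq
      exact lt_irrefl 0 hq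
    obtain ⟨τ, hτpos⟩ := hτex
    refine ⟨(Function.update ys n σ, Function.update xs n τ, W * u σ), fun _ => ?_⟩
    refine ⟨fun j hj => Function.update_of_ne (Nat.ne_of_lt hj) _ _,
      fun i hi => Function.update_of_ne (Nat.ne_of_lt hi) _ _, ?_⟩
    simp only
    refine ⟨⟨mul01_nonneg hW0 (hu0 σ), mul01_le_one hW0 hW1 (hu0 σ) (hu1 σ)⟩, ?_, ?_, ?_, ?_⟩
    · intro j hj
      rcases Nat.lt_succ_iff_lt_or_eq.1 hj with hj' | hj'
      · rw [Function.update_of_ne (Nat.ne_of_lt hj')]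
        exact (mul_le_left01 hW0 (hu0 σ) (hu1 σ)).trans (hi1 j hj')
      · subst hj'
        rw [Function.update_self]
        exact mul_le_right01 hW0 hW1 (hu0 σ)
    · exact le_of_lt hσ2
    · intro i j hij hj
      rcases Nat.lt_succ_iff_lt_or_eq.1 hj with hj' | hj'
      · rw [Function.update_of_ne (Nat.ne_of_lt (lt_trans hij hj')),
          Function.update_of_ne (Nat.ne_of_lt hj')]
        exact hi3 i j hij hj'
      · subst hj'
        rw [Function.update_of_ne (Nat.ne_of_lt hij), Function.update_self]
        have := Set.mem_iInter.1 hσ3 ⟨i, hij⟩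
        simpa using this
    · intro i j hji hi
      rcases Nat.lt_succ_iff_lt_or_eq.1 hi with hi' | hi'
      · rw [Function.update_of_ne (Nat.ne_of_lt hi'),
          Function.update_of_ne (Nat.ne_of_lt (lt_of_le_of_lt hji hi'))]
        exact hi4 i j hji hi'
      · subst hi'
        rw [Function.update_self]
        have hWτ : 0 < W τ ∧ 0 < u σ τ := by
          have h1 : (0:ℝ) ≤ W τ := by
            have := ContinuousMap.le_def.1 hW0 τ
            simpa using this
          have h2 : (0:ℝ) ≤ u σ τ := by
            have := ContinuousMap.le_def.1 (hu0 σ) τ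
            simpa using this
          have h3 : 0 < W τ * u σ τ := by
            have := hτpos
            simpa [ContinuousMap.mul_apply] using this
          constructor <;> nlinarith
        rcases Nat.lt_succ_iff_lt_or_eq.1 (Nat.lt_succ_of_le hji) with hj' | hj'
        · rw [Function.update_of_ne (Nat.ne_of_lt hj')]
          have := ContinuousMap.le_def.1 (hi1 j hj') τ
          linarith [hWτ.1, this]
        · subst hj'
          rw [Function.update_self]
          exact hWτ.2
  choose stepf hstepspec using hstep
  set Fst : ℕ → ((ℕ → S) × (ℕ → T) × C(T, ℝ)) :=
    fun n => Nat.rec ((fun _ => s0), (fun _ => t0), 1) (fun k dk => stepf dk k) n with hFstdef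
  have hFstsucc : ∀ k, Fst (k + 1) = stepf (Fst k) k := fun k => rfl
  have hInv0 : (0 ≤ (Fst 0).2.2 ∧ (Fst 0).2.2 ≤ 1) ∧
      (∀ j, j < 0 → (Fst 0).2.2 ≤ u ((Fst 0).1 j)) ∧
      (b 0 ≤ ulim l fun s => p ((Fst 0).2.2 * u s)) ∧
      (∀ i j, i < j → j < 0 →
        |col ((Fst 0).2.1 i) ((Fst 0).1 j) - col ((Fst 0).2.1 i) η| < 1 / ((j : ℝ) + 1)) ∧
      (∀ i j, j ≤ i → i < 0 → 0 < u ((Fst 0).1 j) ((Fst 0).2.1 i)) := by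
    refine ⟨⟨zero_le_one, le_refl 1⟩, fun j hj => absurd hj (Nat.not_lt_zero j), ?_,
      fun i j _ hj => absurd hj (Nat.not_lt_zero j), fun i j _ hi => absurd hi (Nat.not_lt_zero i)⟩
    have hfun : (fun s => p ((Fst 0).2.2 * u s)) = fun s => p (u s) := by
      funext s
      show p (1 * u s) = p (u s)
      rw [one_mul]
    rw [hfun]
    have hbb : b 0 = ε₀ := by rw [hbdef, bSeq_zero]
    rw [hbb]
    refine le_ulim (fun s => pval_abs_le p hp (hu0 s) (hu1 s)) ?_
    exact Filter.mem_of_superset hlbad fun s hs => hpu s hs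
  have hInvAll : ∀ k, (0 ≤ (Fst k).2.2 ∧ (Fst k).2.2 ≤ 1) ∧
      (∀ j, j < k → (Fst k).2.2 ≤ u ((Fst k).1 j)) ∧
      (b k ≤ ulim l fun s => p ((Fst k).2.2 * u s)) ∧
      (∀ i j, i < j → j < k →
        |col ((Fst k).2.1 i) ((Fst k).1 j) - col ((Fst k).2.1 i) η| < 1 / ((j : ℝ) + 1)) ∧
      (∀ i j, j ≤ i → i < k → 0 < u ((Fst k).1 j) ((Fst k).2.1 i)) := by
    intro k
    induction k with
    | zero => exact hInv0
    | succ n ih =>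
      have := (hstepspec (Fst n) n ih).2.2
      rwa [← hFstsucc n] at this
  have hcoh : ∀ k, (∀ j, j < k → (Fst (k + 1)).1 j = (Fst k).1 j) ∧
      (∀ i, i < k → (Fst (k + 1)).2.1 i = (Fst k).2.1 i) := by
    intro k
    have h := hstepspec (Fst k) k (hInvAll k)
    rw [← hFstsucc k] at h
    exact ⟨h.1, h.2.1⟩
  have hys_stab : ∀ j k, j < k → (Fst k).1 j = (Fst (j + 1)).1 j := by
    intro j k hjk
    induction k with
    | zero => exact absurd hjk (Nat.not_lt_zero j)
    | succ n ih =>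
      rcases Nat.lt_succ_iff_lt_or_eq.1 hjk with h | h
      · rw [(hcoh n).1 j h]
        exact ih h
      · subst h
        rfl
  have hxs_stab : ∀ i k, i < k → (Fst k).2.1 i = (Fst (i + 1)).2.1 i := by
    intro i k hik
    induction k with
    | zero => exact absurd hik (Nat.not_lt_zero i)
    | succ n ih =>
      rcases Nat.lt_succ_iff_lt_or_eq.1 hik with h | h
      · rw [(hcoh n).2 i h]
        exact ih h
      · subst h
        rfl
  set Yse : ℕ → S := fun j => (Fst (j + 1)).1 j with hYse
  set Xse : ℕ → T := fun i => (Fst (i + 1)).2.1 i with hXse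
  have hI3' : ∀ i j, i < j → |col (Xse i) (Yse j) - col (Xse i) η| < 1 / ((j : ℝ) + 1) := by
    intro i j hij
    have h := (hInvAll (j + 1)).2.2.2.1 i j hij (Nat.lt_succ_self j)
    rwa [hxs_stab i (j + 1) (Nat.lt_succ_of_lt hij)] at h
  have hI4' : ∀ i j, j ≤ i → 0 < u (Yse j) (Xse i) := by
    intro i j hji
    have h := (hInvAll (i + 1)).2.2.2.2 i j hji (Nat.lt_succ_self i)
    rwa [hys_stab j (i + 1) (Nat.lt_succ_of_le hji)] at h
  -- final double limit contradiction
  set P : Ultrafilter ℕ := Ultrafilter.of atTop with hPdef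
  have hPle : (P : Filter ℕ) ≤ atTop := Ultrafilter.of_le _
  obtain ⟨xstar, -, hxle⟩ := isCompact_univ.ultrafilter_le_nhds (P.map Xse)
    (by rw [le_principal_iff]; exact Filter.univ_mem)
  have hXtend : Tendsto Xse (P : Filter ℕ) (𝓝 xstar) := by
    have h := hxle
    rw [Ultrafilter.coe_map] at h
    exact h
  obtain ⟨ηq, -, hyle⟩ := isCompact_univ.ultrafilter_le_nhds (P.map Yse)
    (by rw [le_principal_iff]; exact Filter.univ_mem)
  have hYtend : Tendsto Yse (P : Filter ℕ) (𝓝 ηq) := by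
    have h := hyle
    rw [Ultrafilter.coe_map] at h
    exact h
  have hcj : ∀ j, δ / 2 ≤ |col xstar (Yse j) - col xstar η| := by
    intro j
    have htend : Tendsto (fun i => row (Yse j) (Xse i) - row η (Xse i)) (P : Filter ℕ)
        (𝓝 (row (Yse j) xstar - row η xstar)) :=
      (((row (Yse j)).continuous.tendsto xstar).comp hXtend).sub
        (((row η).continuous.tendsto xstar).comp hXtend)
    have hev : ∀ᶠ i in (P : Filter ℕ), δ / 2 ≤ |row (Yse j) (Xse i) - row η (Xse i)| := by
      have hev0 : ∀ᶠ i in (P : Filter ℕ), j ≤ i :=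
        Filter.le_def.1 hPle _ (Filter.eventually_ge_atTop j)
      exact hev0.mono fun i hi => (hupos (Yse j) (Xse i) (hI4' i j hi)).le
    have := ge_of_tendsto htend.abs hev
    rwa [hcomp xstar (Yse j), hcomp xstar η] at this
  have hge : δ / 2 ≤ |col xstar ηq - col xstar η| := by
    have hdη : Tendsto (fun j => col xstar (Yse j)) (P : Filter ℕ) (𝓝 (col xstar ηq)) :=
      ((col xstar).continuous.tendsto ηq).comp hYtend
    exact ge_of_tendsto (hdη.sub tendsto_const_nhds).abs (Filter.Eventually.of_forall hcj)
  have ha : ∀ i, col (Xse i) ηq = col (Xse i) η := by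
    intro i
    have h1 : Tendsto (fun j => col (Xse i) (Yse j)) (P : Filter ℕ) (𝓝 (col (Xse i) ηq)) :=
      ((col (Xse i)).continuous.tendsto ηq).comp hYtend
    have h0 : Tendsto (fun j => col (Xse i) (Yse j) - col (Xse i) η) (P : Filter ℕ) (𝓝 0) := by
      refine squeeze_zero_norm' ?_
        ((tendsto_one_div_add_atTop_nhds_zero_nat).mono_left hPle)
      have hev0 : ∀ᶠ j in (P : Filter ℕ), i < j :=
        Filter.le_def.1 hPle _ (Filter.eventually_gt_atTop i)
      refine hev0.mono fun j hj => ?_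
      rw [Real.norm_eq_abs]
      exact (hI3' i j hj).le
    have h2 : Tendsto (fun j => col (Xse i) (Yse j)) (P : Filter ℕ) (𝓝 (col (Xse i) η)) := by
      have := h0.add_const (col (Xse i) η)
      simpa using this
    exact tendsto_nhds_unique h1 h2
  have hb1 : Tendsto (fun i => col (Xse i) ηq) (P : Filter ℕ) (𝓝 (col xstar ηq)) := by
    have hfun : (fun i => col (Xse i) ηq) = fun i => row ηq (Xse i) :=
      funext fun i => (hcomp _ _).symm
    rw [hfun]
    have h := ((row ηq).continuous.tendsto xstar).comp hXtend
    rwa [hcomp xstar ηq] at h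
  have hb2 : Tendsto (fun i => col (Xse i) η) (P : Filter ℕ) (𝓝 (col xstar η)) := by
    have hfun : (fun i => col (Xse i) η) = fun i => row η (Xse i) :=
      funext fun i => (hcomp _ _).symm
    rw [hfun]
    have h := ((row η).continuous.tendsto xstar).comp hXtend
    rwa [hcomp xstar η] at h
  have heq : col xstar ηq = col xstar η := by
    have hfun : (fun i => col (Xse i) ηq) = fun i => col (Xse i) η := funext ha
    rw [hfun] at hb1
    exact tendsto_nhds_unique hb1 hb2
  rw [heq] at hge
  simp only [sub_self, abs_zero] at hge
  linarith

end Heart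


section Jordan

variable {T : Type*} [TopologicalSpace T] [CompactSpace T]

noncomputable def posPart (φ : C(T, ℝ) →ₗ[ℝ] ℝ) (g : C(T, ℝ)) : ℝ :=
  sSup ((φ : C(T, ℝ) → ℝ) '' {v | 0 ≤ v ∧ v ≤ g})

variable (φ : C(T, ℝ) →ₗ[ℝ] ℝ) (K : ℝ) (hK0 : 0 ≤ K) (hK : ∀ v, |φ v| ≤ K * ‖v‖)

theorem posPart_set_nonempty {g : C(T, ℝ)} (hg : 0 ≤ g) :
    ((φ : C(T, ℝ) → ℝ) '' {v | 0 ≤ v ∧ v ≤ g}).Nonempty :=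
  ⟨φ 0, ⟨0, ⟨le_refl 0, hg⟩, rfl⟩⟩

theorem norm_le_of_le {v g : C(T, ℝ)} (hv0 : 0 ≤ v) (hvg : v ≤ g) : ‖v‖ ≤ ‖g‖ := by
  refine (ContinuousMap.norm_le _ (norm_nonneg g)).2 fun t => ?_
  have h1 := ContinuousMap.le_def.1 hv0 t
  have h2 := ContinuousMap.le_def.1 hvg t
  simp only [ContinuousMap.zero_apply] at h1
  have h3 := ContinuousMap.norm_coe_le_norm g t
  rw [Real.norm_eq_abs] at h3 ⊢
  rw [abs_of_nonneg h1]
  calc v t ≤ g t := h2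
    _ ≤ |g t| := le_abs_self _
    _ ≤ ‖g‖ := h3

include hK0 hK

theorem posPart_bddAbove (g : C(T, ℝ)) :
    BddAbove ((φ : C(T, ℝ) → ℝ) '' {v | 0 ≤ v ∧ v ≤ g}) := by
  refine ⟨K * ‖g‖, ?_⟩
  rintro y ⟨v, ⟨hv0, hvg⟩, rfl⟩
  calc φ v ≤ |φ v| := le_abs_self _
    _ ≤ K * ‖v‖ := hK v
    _ ≤ K * ‖g‖ := mul_le_mul_of_nonneg_left (norm_le_of_le hv0 hvg) hK0

theorem le_posPart {v g : C(T, ℝ)} (hv0 : 0 ≤ v) (hvg : v ≤ g) : φ v ≤ posPart φ g :=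
  le_csSup (posPart_bddAbove φ K hK0 hK g) ⟨v, ⟨hv0, hvg⟩, rfl⟩

theorem posPart_nonneg {g : C(T, ℝ)} (hg : 0 ≤ g) : 0 ≤ posPart φ g := by
  have := le_posPart φ K hK0 hK (le_refl (0 : C(T, ℝ))) hg
  rwa [map_zero] at this

theorem posPart_zero : posPart φ 0 = 0 := by
  refine le_antisymm ?_ (posPart_nonneg φ K hK0 hK (le_refl 0))
  refine csSup_le (posPart_set_nonempty φ (le_refl 0)) ?_
  rintro y ⟨v, ⟨hv0, hvg⟩, rfl⟩
  have hv : v = 0 := le_antisymm hvg hv0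
  rw [hv, map_zero]

theorem posPart_add {g₁ g₂ : C(T, ℝ)} (hg1 : 0 ≤ g₁) (hg2 : 0 ≤ g₂) :
    posPart φ (g₁ + g₂) = posPart φ g₁ + posPart φ g₂ := by
  have hg12 : 0 ≤ g₁ + g₂ := by
    rw [ContinuousMap.le_def] at hg1 hg2 ⊢
    intro t
    have h1 := hg1 t; have h2 := hg2 t
    simp only [ContinuousMap.zero_apply, ContinuousMap.add_apply] at *
    linarith
  apply le_antisymm
  · refine csSup_le (posPart_set_nonempty φ hg12) ?_
    rintro y ⟨v, ⟨hv0, hvg⟩, rfl⟩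
    set v₁ : C(T, ℝ) := v ⊓ g₁ with hv₁
    set v₂ : C(T, ℝ) := v - v ⊓ g₁ with hv₂
    have hv₁0 : 0 ≤ v₁ := by
      rw [ContinuousMap.le_def]
      intro t
      have h1 := ContinuousMap.le_def.1 hv0 t
      have h2 := ContinuousMap.le_def.1 hg1 t
      simp only [ContinuousMap.zero_apply] at h1 h2
      simp only [hv₁, ContinuousMap.inf_apply, ContinuousMap.zero_apply, le_inf_iff]
      exact ⟨h1, h2⟩
    have hv₁g : v₁ ≤ g₁ := by
      rw [ContinuousMap.le_def]
      intro t
      simp only [hv₁, ContinuousMap.inf_apply]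
      exact inf_le_right
    have hv₂0 : 0 ≤ v₂ := by
      rw [ContinuousMap.le_def]
      intro t
      simp only [hv₂, ContinuousMap.sub_apply, ContinuousMap.inf_apply,
        ContinuousMap.zero_apply]
      simp only [sub_nonneg]
      exact inf_le_left
    have hv₂g : v₂ ≤ g₂ := by
      rw [ContinuousMap.le_def]
      intro t
      have h2 := ContinuousMap.le_def.1 hvg t
      have h3 := ContinuousMap.le_def.1 hg2 t
      simp only [ContinuousMap.add_apply, ContinuousMap.zero_apply] at h2 h3
      simp only [hv₂, ContinuousMap.sub_apply, ContinuousMap.inf_apply]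
      rcases le_total (v t) (g₁ t) with h | h
      · rw [inf_eq_left.2 h]
        simpa using h3
      · rw [inf_eq_right.2 h]
        linarith
    have hsplit : v = v₁ + v₂ := by
      ext t
      simp [hv₁, hv₂]
    rw [hsplit, map_add]
    exact add_le_add (le_posPart φ K hK0 hK hv₁0 hv₁g) (le_posPart φ K hK0 hK hv₂0 hv₂g)
  · rw [← sub_nonneg]
    have h1 : posPart φ g₁ ≤ posPart φ (g₁ + g₂) - posPart φ g₂ := by
      refine csSup_le (posPart_set_nonempty φ hg1) ?_
      rintro y ⟨v₁, ⟨hv₁0, hv₁g⟩, rfl⟩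
      rw [le_sub_iff_add_le, add_comm, ← le_sub_iff_add_le]
      refine csSup_le (posPart_set_nonempty φ hg2) ?_
      rintro z ⟨v₂, ⟨hv₂0, hv₂g⟩, rfl⟩
      rw [le_sub_iff_add_le]
      have hmem : φ v₂ + φ v₁ = φ (v₁ + v₂) := by rw [map_add]; ring
      rw [hmem]
      refine le_posPart φ K hK0 hK ?_ ?_
      · rw [ContinuousMap.le_def] at hv₁0 hv₂0 ⊢
        intro t
        have h4 := hv₁0 t; have h5 := hv₂0 t
        simp only [ContinuousMap.zero_apply, ContinuousMap.add_apply] at *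
        linarith
      · rw [ContinuousMap.le_def] at hv₁g hv₂g ⊢
        intro t
        have h4 := hv₁g t; have h5 := hv₂g t
        simp only [ContinuousMap.add_apply] at *
        linarith
    linarith

theorem posPart_smul {g : C(T, ℝ)} (hg : 0 ≤ g) {c : ℝ} (hc : 0 ≤ c) :
    posPart φ (c • g) = c * posPart φ g := by
  rcases eq_or_lt_of_le hc with hc0 | hc0
  · rw [← hc0, zero_smul, zero_mul, posPart_zero φ K hK0 hK]
  apply le_antisymm
  · refine csSup_le (posPart_set_nonempty φ (by
      rw [ContinuousMap.le_def]
      intro t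
      have h1 := ContinuousMap.le_def.1 hg t
      simp only [ContinuousMap.zero_apply, ContinuousMap.smul_apply, smul_eq_mul] at *
      positivity)) ?_
    rintro y ⟨v, ⟨hv0, hvg⟩, rfl⟩
    have hv' : φ v = c * φ (c⁻¹ • v) := by
      rw [map_smul, smul_eq_mul]
      field_simp
    rw [hv']
    refine mul_le_mul_of_nonneg_left (le_posPart φ K hK0 hK ?_ ?_) hc
    · rw [ContinuousMap.le_def] at hv0 ⊢
      intro t
      have h1 := hv0 t
      simp only [ContinuousMap.zero_apply, ContinuousMap.smul_apply, smul_eq_mul] at *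
      positivity
    · rw [ContinuousMap.le_def] at hvg ⊢
      intro t
      have h1 := hvg t
      simp only [ContinuousMap.smul_apply, smul_eq_mul] at *
      rw [inv_mul_le_iff₀ hc0]
      linarith [h1]
  · rw [mul_comm, ← le_div_iff₀ hc0]
    refine csSup_le (posPart_set_nonempty φ hg) ?_
    rintro y ⟨v, ⟨hv0, hvg⟩, rfl⟩
    rw [le_div_iff₀ hc0, mul_comm]
    have hv' : c * φ v = φ (c • v) := by rw [map_smul, smul_eq_mul]
    rw [hv']
    refine le_posPart φ K hK0 hK ?_ ?_
    · rw [ContinuousMap.le_def] at hv0 ⊢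
      intro t
      have h1 := hv0 t
      simp only [ContinuousMap.zero_apply, ContinuousMap.smul_apply, smul_eq_mul] at *
      positivity
    · rw [ContinuousMap.le_def] at hvg ⊢
      intro t
      have h1 := hvg t
      simp only [ContinuousMap.smul_apply, smul_eq_mul] at *
      exact mul_le_mul_of_nonneg_left h1 hc

omit hK0 hK in
theorem sup_zero_nonneg (g : C(T, ℝ)) : (0 : C(T,ℝ)) ≤ g ⊔ 0 := le_sup_right

omit hK0 hK in
theorem real_smul_sup (r a : ℝ) (hr : 0 ≤ r) : (r * a) ⊔ 0 = r * (a ⊔ 0) := by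
  calc (r * a) ⊔ 0 = (a * r) ⊔ (0 * r) := by rw [mul_comm, zero_mul]
    _ = (a ⊔ 0) * r := (max_mul_of_nonneg a 0 hr).symm
    _ = r * (a ⊔ 0) := mul_comm _ _

theorem jordan_repr {g a bb : C(T, ℝ)} (ha : 0 ≤ a) (hb : 0 ≤ bb) (hg : g = a - bb) :
    posPart φ (g ⊔ 0) - posPart φ ((-g) ⊔ 0) = posPart φ a - posPart φ bb := by
  have hkey : (g ⊔ 0) + bb = ((-g) ⊔ 0) + a := by
    ext t
    have hgt : g t = a t - bb t := by
      rw [hg]; simp [ContinuousMap.sub_apply]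
    simp only [ContinuousMap.sup_apply, ContinuousMap.add_apply, ContinuousMap.neg_apply,
      ContinuousMap.zero_apply]
    rcases le_total (g t) 0 with h | h
    · rw [sup_eq_right.2 h, sup_eq_left.2 (by linarith : (0:ℝ) ≤ -(g t))]
      linarith
    · rw [sup_eq_left.2 h, sup_eq_right.2 (by linarith : -(g t) ≤ (0:ℝ))]
      linarith
  have h1 := posPart_add φ K hK0 hK (sup_zero_nonneg g) hb
  have h2 := posPart_add φ K hK0 hK (sup_zero_nonneg (-g)) ha
  rw [hkey, h2] at h1
  linarith

theorem jordanFun_add (g k : C(T, ℝ)) :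
    (posPart φ ((g + k) ⊔ 0) - posPart φ ((-(g + k)) ⊔ 0))
      = (posPart φ (g ⊔ 0) - posPart φ ((-g) ⊔ 0))
        + (posPart φ (k ⊔ 0) - posPart φ ((-k) ⊔ 0)) := by
  have hsum : g + k = ((g ⊔ 0) + (k ⊔ 0)) - (((-g) ⊔ 0) + ((-k) ⊔ 0)) := by
    ext t
    simp only [ContinuousMap.add_apply, ContinuousMap.sub_apply, ContinuousMap.sup_apply,
      ContinuousMap.neg_apply, ContinuousMap.zero_apply]
    have e1 : max (g t) 0 - max (-(g t)) 0 = g t := max_zero_sub_max_neg_zero_eq_self (g t)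
    have e2 : max (k t) 0 - max (-(k t)) 0 = k t := max_zero_sub_max_neg_zero_eq_self (k t)
    linarith
  have ha : (0:C(T,ℝ)) ≤ (g ⊔ 0) + (k ⊔ 0) := by
    rw [ContinuousMap.le_def]
    intro t
    simp only [ContinuousMap.add_apply, ContinuousMap.sup_apply, ContinuousMap.zero_apply]
    have := le_max_right (g t) 0
    have := le_max_right (k t) 0
    linarith [le_max_right (g t) (0:ℝ), le_max_right (k t) (0:ℝ)]
  have hb : (0:C(T,ℝ)) ≤ ((-g) ⊔ 0) + ((-k) ⊔ 0) := by
    rw [ContinuousMap.le_def]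
    intro t
    simp only [ContinuousMap.add_apply, ContinuousMap.sup_apply, ContinuousMap.zero_apply,
      ContinuousMap.neg_apply]
    linarith [le_max_right (-(g t)) (0:ℝ), le_max_right (-(k t)) (0:ℝ)]
  rw [jordan_repr φ K hK0 hK ha hb hsum,
    posPart_add φ K hK0 hK (sup_zero_nonneg g) (sup_zero_nonneg k),
    posPart_add φ K hK0 hK (sup_zero_nonneg (-g)) (sup_zero_nonneg (-k))]
  ring

theorem jordanFun_smul (r : ℝ) (g : C(T, ℝ)) :
    (posPart φ ((r • g) ⊔ 0) - posPart φ ((-(r • g)) ⊔ 0))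
      = r * (posPart φ (g ⊔ 0) - posPart φ ((-g) ⊔ 0)) := by
  rcases le_total 0 r with hr | hr
  · have ha : r • g ⊔ 0 = r • (g ⊔ 0) := by
      ext t
      simp only [ContinuousMap.sup_apply, ContinuousMap.smul_apply, ContinuousMap.zero_apply,
        smul_eq_mul]
      exact real_smul_sup r (g t) hr
    have hb : (-(r • g)) ⊔ 0 = r • ((-g) ⊔ 0) := by
      ext t
      simp only [ContinuousMap.sup_apply, ContinuousMap.smul_apply, ContinuousMap.zero_apply,
        ContinuousMap.neg_apply, smul_eq_mul]
      rw [show -(r * g t) = r * (-(g t)) by ring]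
      exact real_smul_sup r (-(g t)) hr
    rw [ha, hb, posPart_smul φ K hK0 hK (sup_zero_nonneg g) hr,
      posPart_smul φ K hK0 hK (sup_zero_nonneg (-g)) hr]
    ring
  · have hr' : 0 ≤ -r := by linarith
    have ha : r • g ⊔ 0 = (-r) • ((-g) ⊔ 0) := by
      ext t
      simp only [ContinuousMap.sup_apply, ContinuousMap.smul_apply, ContinuousMap.zero_apply,
        ContinuousMap.neg_apply, smul_eq_mul]
      rw [show r * g t = (-r) * (-(g t)) by ring]
      exact real_smul_sup (-r) (-(g t)) hr'
    have hb : (-(r • g)) ⊔ 0 = (-r) • (g ⊔ 0) := by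
      ext t
      simp only [ContinuousMap.sup_apply, ContinuousMap.smul_apply, ContinuousMap.zero_apply,
        ContinuousMap.neg_apply, smul_eq_mul]
      rw [show -(r * g t) = (-r) * (g t) by ring]
      exact real_smul_sup (-r) (g t) hr'
    rw [ha, hb, posPart_smul φ K hK0 hK (sup_zero_nonneg (-g)) hr',
      posPart_smul φ K hK0 hK (sup_zero_nonneg g) hr']
    ring

/-- The positive part of a bounded functional, as a linear map. -/
noncomputable def jordanPos : C(T, ℝ) →ₗ[ℝ] ℝ where
  toFun g := posPart φ (g ⊔ 0) - posPart φ ((-g) ⊔ 0)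
  map_add' g k := jordanFun_add φ K hK0 hK g k
  map_smul' r g := by
    simp only [RingHom.id_apply, smul_eq_mul]
    exact jordanFun_smul φ K hK0 hK r g

theorem jordanPos_apply (g : C(T, ℝ)) :
    jordanPos φ K hK0 hK g = posPart φ (g ⊔ 0) - posPart φ ((-g) ⊔ 0) := rfl

theorem jordanPos_nonneg {g : C(T, ℝ)} (hg : 0 ≤ g) : 0 ≤ jordanPos φ K hK0 hK g := by
  rw [jordanPos_apply]
  have ha : g ⊔ 0 = g := sup_eq_left.2 hg
  have hb : (-g) ⊔ 0 = (0 : C(T,ℝ)) := by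
    refine sup_eq_right.2 ?_
    rw [ContinuousMap.le_def] at hg ⊢
    intro t
    have := hg t
    simp only [ContinuousMap.neg_apply, ContinuousMap.zero_apply] at *
    linarith
  rw [ha, hb, posPart_zero φ K hK0 hK, sub_zero]
  exact posPart_nonneg φ K hK0 hK hg

theorem jordanPos_ge {g : C(T, ℝ)} (hg : 0 ≤ g) : φ g ≤ jordanPos φ K hK0 hK g := by
  rw [jordanPos_apply]
  have ha : g ⊔ 0 = g := sup_eq_left.2 hg
  have hb : (-g) ⊔ 0 = (0 : C(T,ℝ)) := by
    refine sup_eq_right.2 ?_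
    rw [ContinuousMap.le_def] at hg ⊢
    intro t
    have := hg t
    simp only [ContinuousMap.neg_apply, ContinuousMap.zero_apply] at *
    linarith
  rw [ha, hb, posPart_zero φ K hK0 hK, sub_zero]
  exact le_posPart φ K hK0 hK hg (le_refl g)

end Jordan


section Extend

open OnePoint

variable {Z : Type*} [TopologicalSpace Z] [LocallyCompactSpace Z] [T2Space Z]

/-- extension of a `C₀` function by `0` to the one-point compactification -/
noncomputable def extOP {β : Type*} [TopologicalSpace β] [Zero β] (f : C₀(Z, β)) :
    C(OnePoint Z, β) := by
  refine ⟨fun t => t.elim 0 f, ?_⟩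
  rw [OnePoint.continuous_iff]
  constructor
  · rw [Filter.coclosedCompact_eq_cocompact]
    exact zero_at_infty f
  · exact map_continuous f

@[simp] theorem extOP_coe {β : Type*} [TopologicalSpace β] [Zero β] (f : C₀(Z, β)) (x : Z) :
    extOP f (x : OnePoint Z) = f x := rfl

@[simp] theorem extOP_infty {β : Type*} [TopologicalSpace β] [Zero β] (f : C₀(Z, β)) :
    extOP f (∞ : OnePoint Z) = 0 := rfl

/-- real part of a complex `C₀` function -/
noncomputable def c0Re (f : C₀(Z, ℂ)) : C₀(Z, ℝ) := by
  refine ⟨⟨fun x => (f x).re, Complex.continuous_re.comp (map_continuous f)⟩, ?_⟩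
  have h := (Complex.continuous_re.tendsto 0).comp (zero_at_infty (α := Z) f)
  simpa [Function.comp_def] using h

@[simp] theorem c0Re_apply (f : C₀(Z, ℂ)) (x : Z) : c0Re f x = (f x).re := rfl

/-- imaginary part of a complex `C₀` function -/
noncomputable def c0Im (f : C₀(Z, ℂ)) : C₀(Z, ℝ) := by
  refine ⟨⟨fun x => (f x).im, Complex.continuous_im.comp (map_continuous f)⟩, ?_⟩
  have h := (Complex.continuous_im.tendsto 0).comp (zero_at_infty (α := Z) f)
  simpa [Function.comp_def] using h

@[simp] theorem c0Im_apply (f : C₀(Z, ℂ)) (x : Z) : c0Im f x = (f x).im := rfl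

theorem tendsto_restr (a : C(OnePoint Z, ℝ)) :
    Filter.Tendsto (fun x : Z => a x) (Filter.cocompact Z) (𝓝 (a ∞)) := by
  have h := (a.continuous.tendsto ∞).comp OnePoint.tendsto_coe_infty
  rwa [Filter.coclosedCompact_eq_cocompact] at h

/-- restriction of a continuous function on the compactification, recentred at `∞`, as a
complex `C₀` function -/
noncomputable def restrC (a : C(OnePoint Z, ℝ)) : C₀(Z, ℂ) := by
  refine ⟨⟨fun x => ((a x - a ∞ : ℝ) : ℂ),
    Complex.continuous_ofReal.comp ((a.continuous.comp OnePoint.continuous_coe).sub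
      continuous_const)⟩, ?_⟩
  have h1 := (tendsto_restr a).sub_const (a ∞)
  rw [sub_self] at h1
  have h2 := (Complex.continuous_ofReal.tendsto 0).comp h1
  simp only [Complex.ofReal_zero] at h2
  exact h2

@[simp] theorem restrC_apply (a : C(OnePoint Z, ℝ)) (x : Z) :
    restrC a x = ((a x - a ∞ : ℝ) : ℂ) := rfl

theorem restrC_add (a b : C(OnePoint Z, ℝ)) : restrC (a + b) = restrC a + restrC b := by
  ext x
  simp only [restrC_apply, ZeroAtInftyContinuousMap.add_apply, ContinuousMap.add_apply]
  push_cast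
  ring

theorem restrC_smul (r : ℝ) (a : C(OnePoint Z, ℝ)) :
    restrC (r • a) = (r : ℂ) • restrC a := by
  ext x
  simp only [restrC_apply, ZeroAtInftyContinuousMap.smul_apply, ContinuousMap.smul_apply,
    smul_eq_mul]
  push_cast
  ring

theorem c0_norm_apply_le {β : Type*} [NormedAddCommGroup β] (f : C₀(Z, β)) (x : Z) :
    ‖f x‖ ≤ ‖f‖ := by
  rw [← ZeroAtInftyContinuousMap.norm_toBCF_eq_norm]
  exact f.toBCF.norm_coe_le_norm x

theorem c0_norm_le {β : Type*} [NormedAddCommGroup β] (f : C₀(Z, β)) {B : ℝ} (hB : 0 ≤ B)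
    (h : ∀ x, ‖f x‖ ≤ B) : ‖f‖ ≤ B := by
  rw [← ZeroAtInftyContinuousMap.norm_toBCF_eq_norm]
  exact (BoundedContinuousFunction.norm_le hB).2 h

theorem restrC_norm_le (a : C(OnePoint Z, ℝ)) : ‖restrC a‖ ≤ 2 * ‖a‖ := by
  refine c0_norm_le _ (by positivity) fun x => ?_
  rw [restrC_apply, Complex.norm_real]
  have h1 := a.norm_coe_le_norm (x : OnePoint Z)
  have h2 := a.norm_coe_le_norm (∞ : OnePoint Z)
  rw [Real.norm_eq_abs] at h1 h2 ⊢
  calc |a x - a ∞| ≤ |a (x : OnePoint Z)| + |a ∞| := abs_sub _ _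
    _ ≤ 2 * ‖a‖ := by linarith

end Extend


end SepC0Proof

open scoped ZeroAtInfty
open SepC0Proof Filter Topology OnePoint

/-- Let `X`, `Y` be locally compact Hausdorff spaces and let
`f : X × Y → ℂ` be a bounded, separately `C₀` function (witnessed by the slice
families `F` and `Fx`).  Identifying a regular Borel measure `μ` on `X` with a
bounded linear functional on `C₀(X, ℂ)` (Riesz representation), the function
`y ↦ ∫_X f(x, y) dμ(x) = μ (f (·, y))` belongs to `C₀(Y, ℂ)`. -/
theorem sepC0_integral_first_variable
    {X Y : Type*} [TopologicalSpace X] [LocallyCompactSpace X] [T2Space X]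
    [TopologicalSpace Y] [LocallyCompactSpace Y] [T2Space Y]
    (f : X × Y → ℂ) (hbdd : ∃ C : ℝ, ∀ p, ‖f p‖ ≤ C)
    (F : Y → C₀(X, ℂ)) (hF : ∀ x y, F y x = f (x, y))
    (Fx : X → C₀(Y, ℂ)) (hFx : ∀ x y, Fx x y = f (x, y))
    (μ : C₀(X, ℂ) →L[ℂ] ℂ) :
    ∃ g : C₀(Y, ℂ), ∀ y, g y = μ (F y) := by
  classical
  obtain ⟨C, hC⟩ := hbdd
  set K : ℝ := 2 * ‖μ‖ with hKdef
  have hK0 : 0 ≤ K := by rw [hKdef]; positivity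
  set φ₁ : C(OnePoint X, ℝ) →ₗ[ℝ] ℝ :=
    { toFun := fun a => (μ (restrC a)).re
      map_add' := fun a b => by
        beta_reduce
        rw [restrC_add, map_add, Complex.add_re]
      map_smul' := fun r a => by
        show (μ (restrC (r • a))).re = (RingHom.id ℝ) r • (μ (restrC a)).re
        rw [restrC_smul, _root_.map_smul, RingHom.id_apply, smul_eq_mul]
        simp [Complex.mul_re] } with hφ₁def
  set φ₂ : C(OnePoint X, ℝ) →ₗ[ℝ] ℝ :=
    { toFun := fun a => (μ (restrC a)).im
      map_add' := fun a b => by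
        beta_reduce
        rw [restrC_add, map_add, Complex.add_im]
      map_smul' := fun r a => by
        show (μ (restrC (r • a))).im = (RingHom.id ℝ) r • (μ (restrC a)).im
        rw [restrC_smul, _root_.map_smul, RingHom.id_apply, smul_eq_mul]
        simp [Complex.mul_im] } with hφ₂def
  have hφ₁app : ∀ a, φ₁ a = (μ (restrC a)).re := fun a => rfl
  have hφ₂app : ∀ a, φ₂ a = (μ (restrC a)).im := fun a => rfl
  have hφ₁K : ∀ a, |φ₁ a| ≤ K * ‖a‖ := by
    intro a
    rw [hφ₁app]
    calc |(μ (restrC a)).re| ≤ ‖μ (restrC a)‖ := Complex.abs_re_le_norm _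
      _ ≤ ‖μ‖ * ‖restrC a‖ := μ.le_opNorm _
      _ ≤ ‖μ‖ * (2 * ‖a‖) := mul_le_mul_of_nonneg_left (restrC_norm_le a) (norm_nonneg μ)
      _ = K * ‖a‖ := by rw [hKdef]; ring
  have hφ₂K : ∀ a, |φ₂ a| ≤ K * ‖a‖ := by
    intro a
    rw [hφ₂app]
    calc |(μ (restrC a)).im| ≤ ‖μ (restrC a)‖ := Complex.abs_im_le_norm _
      _ ≤ ‖μ‖ * ‖restrC a‖ := μ.le_opNorm _
      _ ≤ ‖μ‖ * (2 * ‖a‖) := mul_le_mul_of_nonneg_left (restrC_norm_le a) (norm_nonneg μ)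
      _ = K * ‖a‖ := by rw [hKdef]; ring
  set p₁ := jordanPos φ₁ K hK0 hφ₁K with hp₁def
  set q₁ : C(OnePoint X, ℝ) →ₗ[ℝ] ℝ := p₁ - φ₁ with hq₁def
  set p₂ := jordanPos φ₂ K hK0 hφ₂K with hp₂def
  set q₂ : C(OnePoint X, ℝ) →ₗ[ℝ] ℝ := p₂ - φ₂ with hq₂def
  have hp₁pos : ∀ h : C(OnePoint X, ℝ), 0 ≤ h → 0 ≤ p₁ h :=
    fun h hh => jordanPos_nonneg φ₁ K hK0 hφ₁K hh
  have hp₂pos : ∀ h : C(OnePoint X, ℝ), 0 ≤ h → 0 ≤ p₂ h :=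
    fun h hh => jordanPos_nonneg φ₂ K hK0 hφ₂K hh
  have hq₁pos : ∀ h : C(OnePoint X, ℝ), 0 ≤ h → 0 ≤ q₁ h := by
    intro h hh
    rw [hq₁def]
    simp only [LinearMap.sub_apply]
    have := jordanPos_ge φ₁ K hK0 hφ₁K hh
    rw [hp₁def]
    linarith
  have hq₂pos : ∀ h : C(OnePoint X, ℝ), 0 ≤ h → 0 ≤ q₂ h := by
    intro h hh
    rw [hq₂def]
    simp only [LinearMap.sub_apply]
    have := jordanPos_ge φ₂ K hK0 hφ₂K hh
    rw [hp₂def]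
    linarith
  -- rows and columns
  set rowR : OnePoint Y → C(OnePoint X, ℝ) :=
    fun s => Option.elim s 0 (fun y => extOP (c0Re (F y))) with hrowRdef
  set rowI : OnePoint Y → C(OnePoint X, ℝ) :=
    fun s => Option.elim s 0 (fun y => extOP (c0Im (F y))) with hrowIdef
  set colR : OnePoint X → C(OnePoint Y, ℝ) :=
    fun t => Option.elim t 0 (fun x => extOP (c0Re (Fx x))) with hcolRdef
  set colI : OnePoint X → C(OnePoint Y, ℝ) :=
    fun t => Option.elim t 0 (fun x => extOP (c0Im (Fx x))) with hcolIdef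
  have hrowRcoe : ∀ y : Y, rowR (y : OnePoint Y) = extOP (c0Re (F y)) := fun y => rfl
  have hrowRinf : rowR (∞ : OnePoint Y) = 0 := rfl
  have hrowIcoe : ∀ y : Y, rowI (y : OnePoint Y) = extOP (c0Im (F y)) := fun y => rfl
  have hrowIinf : rowI (∞ : OnePoint Y) = 0 := rfl
  have hcompR : ∀ (t : OnePoint X) (s : OnePoint Y), rowR s t = colR t s := by
    intro t s
    induction t using OnePoint.rec with
    | infty =>
      induction s using OnePoint.rec with
      | infty => rfl
      | coe y => rfl
    | coe x =>
      induction s using OnePoint.rec with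
      | infty => rfl
      | coe y =>
        show extOP (c0Re (F y)) (x : OnePoint X) = extOP (c0Re (Fx x)) (y : OnePoint Y)
        rw [extOP_coe, extOP_coe, c0Re_apply, c0Re_apply, hF, hFx]
  have hcompI : ∀ (t : OnePoint X) (s : OnePoint Y), rowI s t = colI t s := by
    intro t s
    induction t using OnePoint.rec with
    | infty =>
      induction s using OnePoint.rec with
      | infty => rfl
      | coe y => rfl
    | coe x =>
      induction s using OnePoint.rec with
      | infty => rfl
      | coe y =>
        show extOP (c0Im (F y)) (x : OnePoint X) = extOP (c0Im (Fx x)) (y : OnePoint Y)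
        rw [extOP_coe, extOP_coe, c0Im_apply, c0Im_apply, hF, hFx]
  have hboundR : ∀ (s : OnePoint Y) (t : OnePoint X), |rowR s t| ≤ |C| := by
    intro s t
    have habs : ∀ y x, |(f (x, y)).re| ≤ |C| := by
      intro y x
      calc |(f (x, y)).re| ≤ ‖f (x, y)‖ := Complex.abs_re_le_norm _
        _ ≤ C := hC _
        _ ≤ |C| := le_abs_self C
    have h0C : (0 : ℝ) ≤ |C| := abs_nonneg C
    induction s using OnePoint.rec with
    | infty => simpa [hrowRinf] using h0C
    | coe y =>
      rw [hrowRcoe]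
      induction t using OnePoint.rec with
      | infty => simpa using h0C
      | coe x =>
        rw [extOP_coe, c0Re_apply, hF]
        exact habs y x
  have hboundI : ∀ (s : OnePoint Y) (t : OnePoint X), |rowI s t| ≤ |C| := by
    intro s t
    have habs : ∀ y x, |(f (x, y)).im| ≤ |C| := by
      intro y x
      calc |(f (x, y)).im| ≤ ‖f (x, y)‖ := Complex.abs_im_le_norm _
        _ ≤ C := hC _
        _ ≤ |C| := le_abs_self C
    have h0C : (0 : ℝ) ≤ |C| := abs_nonneg C
    induction s using OnePoint.rec with
    | infty => simpa [hrowIinf] using h0C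
    | coe y =>
      rw [hrowIcoe]
      induction t using OnePoint.rec with
      | infty => simpa using h0C
      | coe x =>
        rw [extOP_coe, c0Im_apply, hF]
        exact habs y x
  -- continuity via the heart
  have hc1 : Continuous fun s => p₁ (rowR s) := heart p₁ hp₁pos rowR colR hcompR |C| hboundR
  have hc2 : Continuous fun s => q₁ (rowR s) := heart q₁ hq₁pos rowR colR hcompR |C| hboundR
  have hc3 : Continuous fun s => p₂ (rowR s) := heart p₂ hp₂pos rowR colR hcompR |C| hboundR
  have hc4 : Continuous fun s => q₂ (rowR s) := heart q₂ hq₂pos rowR colR hcompR |C| hboundR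
  have hc5 : Continuous fun s => p₁ (rowI s) := heart p₁ hp₁pos rowI colI hcompI |C| hboundI
  have hc6 : Continuous fun s => q₁ (rowI s) := heart q₁ hq₁pos rowI colI hcompI |C| hboundI
  have hc7 : Continuous fun s => p₂ (rowI s) := heart p₂ hp₂pos rowI colI hcompI |C| hboundI
  have hc8 : Continuous fun s => q₂ (rowI s) := heart q₂ hq₂pos rowI colI hcompI |C| hboundI
  have hφ₁R : Continuous fun s => φ₁ (rowR s) := by
    have hfn : (fun s => φ₁ (rowR s)) = fun s => p₁ (rowR s) - q₁ (rowR s) := by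
      funext s
      rw [hq₁def]
      simp only [LinearMap.sub_apply]
      ring
    rw [hfn]
    exact hc1.sub hc2
  have hφ₂R : Continuous fun s => φ₂ (rowR s) := by
    have hfn : (fun s => φ₂ (rowR s)) = fun s => p₂ (rowR s) - q₂ (rowR s) := by
      funext s
      rw [hq₂def]
      simp only [LinearMap.sub_apply]
      ring
    rw [hfn]
    exact hc3.sub hc4
  have hφ₁I : Continuous fun s => φ₁ (rowI s) := by
    have hfn : (fun s => φ₁ (rowI s)) = fun s => p₁ (rowI s) - q₁ (rowI s) := by
      funext s
      rw [hq₁def]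
      simp only [LinearMap.sub_apply]
      ring
    rw [hfn]
    exact hc5.sub hc6
  have hφ₂I : Continuous fun s => φ₂ (rowI s) := by
    have hfn : (fun s => φ₂ (rowI s)) = fun s => p₂ (rowI s) - q₂ (rowI s) := by
      funext s
      rw [hq₂def]
      simp only [LinearMap.sub_apply]
      ring
    rw [hfn]
    exact hc7.sub hc8
  set G : OnePoint Y → ℂ := fun s =>
    (((φ₁ (rowR s) : ℝ) : ℂ) + ((φ₂ (rowR s) : ℝ) : ℂ) * Complex.I)
      + Complex.I * (((φ₁ (rowI s) : ℝ) : ℂ) + ((φ₂ (rowI s) : ℝ) : ℂ) * Complex.I)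
      with hGdef
  have hGcont : Continuous G := by
    rw [hGdef]
    exact ((Complex.continuous_ofReal.comp hφ₁R).add
      ((Complex.continuous_ofReal.comp hφ₂R).mul continuous_const)).add
      (continuous_const.mul ((Complex.continuous_ofReal.comp hφ₁I).add
        ((Complex.continuous_ofReal.comp hφ₂I).mul continuous_const)))
  have hkey : ∀ y : Y, G (y : OnePoint Y) = μ (F y) := by
    intro y
    have hA : restrC (rowR (y : OnePoint Y)) + Complex.I • restrC (rowI (y : OnePoint Y))
        = F y := by
      ext x
      rw [hrowRcoe, hrowIcoe]
      simp only [ZeroAtInftyContinuousMap.add_apply, ZeroAtInftyContinuousMap.smul_apply,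
        restrC_apply, extOP_coe, extOP_infty, c0Re_apply, c0Im_apply, sub_zero, smul_eq_mul]
      rw [mul_comm]
      exact Complex.re_add_im _
    have e1 : μ (restrC (rowR (y : OnePoint Y))) =
        ((φ₁ (rowR (y : OnePoint Y)) : ℝ) : ℂ)
          + ((φ₂ (rowR (y : OnePoint Y)) : ℝ) : ℂ) * Complex.I := by
      rw [hφ₁app, hφ₂app]
      exact (Complex.re_add_im _).symm
    have e2 : μ (restrC (rowI (y : OnePoint Y))) =
        ((φ₁ (rowI (y : OnePoint Y)) : ℝ) : ℂ)
          + ((φ₂ (rowI (y : OnePoint Y)) : ℝ) : ℂ) * Complex.I := by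
      rw [hφ₁app, hφ₂app]
      exact (Complex.re_add_im _).symm
    rw [hGdef]
    show (((φ₁ (rowR (y : OnePoint Y)) : ℝ) : ℂ)
        + ((φ₂ (rowR (y : OnePoint Y)) : ℝ) : ℂ) * Complex.I)
      + Complex.I * (((φ₁ (rowI (y : OnePoint Y)) : ℝ) : ℂ)
        + ((φ₂ (rowI (y : OnePoint Y)) : ℝ) : ℂ) * Complex.I) = μ (F y)
    rw [← e1, ← e2, ← smul_eq_mul, ← _root_.map_smul, ← map_add, hA]
  have hGinf : G (∞ : OnePoint Y) = 0 := by
    rw [hGdef]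
    show (((φ₁ (rowR (∞ : OnePoint Y)) : ℝ) : ℂ)
        + ((φ₂ (rowR (∞ : OnePoint Y)) : ℝ) : ℂ) * Complex.I)
      + Complex.I * (((φ₁ (rowI (∞ : OnePoint Y)) : ℝ) : ℂ)
        + ((φ₂ (rowI (∞ : OnePoint Y)) : ℝ) : ℂ) * Complex.I) = 0
    rw [hrowRinf, hrowIinf]
    simp
  refine ⟨⟨⟨fun y => G (y : OnePoint Y), hGcont.comp OnePoint.continuous_coe⟩, ?_⟩,
    fun y => hkey y⟩
  show Filter.Tendsto (fun y : Y => G (y : OnePoint Y)) (Filter.cocompact Y) (𝓝 0)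
  have h := (hGcont.tendsto ∞).comp OnePoint.tendsto_coe_infty
  rw [Filter.coclosedCompact_eq_cocompact, hGinf] at h
  exact h
end

section
/- Let X and Y be locally compact Hausdorff spaces, and let Φ : M(X) × M(Y) → ℂ be a bounded bilinear map that is weak*-continuous in each variable separately. Then the function f(x,y) := Φ(δ_x, δ_y) is a bounded separately C₀ function on X × Y, and Φ(μ,ν) = ∫_Y ∫_X f(x,y) dμ(x) dν(y) for all μ ∈ M(X), ν ∈ M(Y). Moreover ‖Φ‖ = sup_{x,y} |f(x,y)|. -/
set_option maxHeartbeats 1000000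


open scoped ZeroAtInfty

/-- A bounded function `f : X × Y → ℂ` is separately `C₀` if all its slices
`f(x, ·)` and `f(·, y)` vanish at infinity. -/
def IsSepC0 {X Y : Type*} [TopologicalSpace X] [TopologicalSpace Y]
    (f : X × Y → ℂ) : Prop :=
  (∃ C : ℝ, ∀ p, ‖f p‖ ≤ C) ∧
    (∀ x, ∃ g : C₀(Y, ℂ), ∀ y, g y = f (x, y)) ∧
    (∀ y, ∃ g : C₀(X, ℂ), ∀ x, g x = f (x, y))

open LinearMap

/-- A weak-star continuous linear functional on a dual space is evaluation at a point. -/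
lemma weakDual_continuous_functional_eq_eval
    {E : Type*} [NormedAddCommGroup E] [NormedSpace ℂ E]
    (φ : WeakDual ℂ E →ₗ[ℂ] ℂ) (hφ : Continuous φ) :
    ∃ g : E, ∀ μ : WeakDual ℂ E, φ μ = μ g := by
  have : Nonempty E := ⟨0⟩
  set B := topDualPairing ℂ E with hB
  have hws : WithSeminorms (LinearMap.toSeminormFamily B : E → Seminorm ℂ (WeakBilin B)) :=
    LinearMap.weakBilin_withSeminorms B
  have hq : Continuous (φ.toSeminorm : WeakDual ℂ E → ℝ) := by
    simpa [LinearMap.coe_toSeminorm] using hφ.norm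
  obtain ⟨s, C, hC0, hC⟩ := Seminorm.bound_of_continuous hws φ.toSeminorm hq
  let L : s → (WeakDual ℂ E →ₗ[ℂ] ℂ) := fun i => B.flip (i : E)
  have hker : ⨅ i : s, ker (L i) ≤ ker φ := by
    intro μ hμ
    simp only [Submodule.mem_iInf, mem_ker] at hμ
    have hsup : (s.sup (LinearMap.toSeminormFamily B)) μ ≤ 0 := by
      refine Seminorm.finset_sup_apply_le le_rfl fun i hi => ?_
      have : (B μ) i = 0 := hμ ⟨i, hi⟩
      show ‖B μ i‖ ≤ 0
      simp [this]
    have := hC μ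
    simp only [Seminorm.smul_apply, LinearMap.toSeminorm_apply, NNReal.smul_def,
      smul_eq_mul] at this
    have h0 : ‖φ μ‖ ≤ 0 := this.trans (by
      have h2 := mul_le_mul_of_nonneg_left hsup C.coe_nonneg
      show (C:ℝ) * (s.sup B.toSeminormFamily) μ ≤ 0
      simpa using h2)
    simpa [mem_ker] using norm_le_zero_iff.mp h0
  have hspan : φ ∈ Submodule.span ℂ (Set.range L) :=
    mem_span_of_iInf_ker_le_ker hker
  obtain ⟨c, hc⟩ := (Submodule.mem_span_range_iff_exists_fun ℂ).mp hspan
  refine ⟨∑ i : s, c i • (i : E), fun μ => ?_⟩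
  have h1 : φ μ = ∑ i : s, c i • (L i μ) := by
    rw [← hc]; simp
  rw [h1, map_sum]
  refine Finset.sum_congr rfl fun i _ => ?_
  rw [map_smul]
  rfl

/-- Let `X`, `Y` be locally compact Hausdorff spaces, and let
`Φ : M(X) × M(Y) → ℂ` be a bounded bilinear map which is separately
weak*-continuous (`M(X) = C₀(X, ℂ)*` with the weak* topology).  Let
`f(x, y) := Φ(δ_x, δ_y)` where `δ` denotes the Dirac measures (given as the
evaluation functionals `dX`, `dY`).  Then `f` is a bounded separately `C₀`
function, `Φ` is given by the iterated integral against `f`, and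
`‖Φ‖ = sup_{x, y} |f(x, y)|` (expressed via coincidence of bounds). -/
theorem sepWeakStarBilinear_eq_integral
    {X Y : Type*} [TopologicalSpace X] [LocallyCompactSpace X] [T2Space X]
    [TopologicalSpace Y] [LocallyCompactSpace Y] [T2Space Y]
    (Φ : WeakDual ℂ C₀(X, ℂ) → WeakDual ℂ C₀(Y, ℂ) → ℂ)
    (hadd₁ : ∀ μ₁ μ₂ ν, Φ (μ₁ + μ₂) ν = Φ μ₁ ν + Φ μ₂ ν)
    (hsmul₁ : ∀ (c : ℂ) μ ν, Φ (c • μ) ν = c * Φ μ ν)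
    (hadd₂ : ∀ μ ν₁ ν₂, Φ μ (ν₁ + ν₂) = Φ μ ν₁ + Φ μ ν₂)
    (hsmul₂ : ∀ (c : ℂ) μ ν, Φ μ (c • ν) = c * Φ μ ν)
    (hbdd : ∃ C : ℝ, ∀ μ ν, ‖Φ μ ν‖ ≤
      C * ‖WeakDual.toStrongDual μ‖ * ‖WeakDual.toStrongDual ν‖)
    (hc₁ : ∀ ν, Continuous fun μ => Φ μ ν)
    (hc₂ : ∀ μ, Continuous fun ν => Φ μ ν)
    (dX : X → WeakDual ℂ C₀(X, ℂ)) (hdX : ∀ x (g : C₀(X, ℂ)), dX x g = g x)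
    (dY : Y → WeakDual ℂ C₀(Y, ℂ)) (hdY : ∀ y (g : C₀(Y, ℂ)), dY y g = g y) :
    IsSepC0 (fun p : X × Y => Φ (dX p.1) (dY p.2)) ∧
      (∀ (μ : WeakDual ℂ C₀(X, ℂ)) (ν : WeakDual ℂ C₀(Y, ℂ))
        (F : Y → C₀(X, ℂ)) (g : C₀(Y, ℂ)),
          (∀ x y, F y x = Φ (dX x) (dY y)) → (∀ y, g y = μ (F y)) →
          Φ μ ν = ν g) ∧
      (∀ C : ℝ, 0 ≤ C →
        ((∀ μ ν, ‖Φ μ ν‖ ≤ C * ‖WeakDual.toStrongDual μ‖ * ‖WeakDual.toStrongDual ν‖) ↔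
          ∀ p : X × Y, ‖Φ (dX p.1) (dY p.2)‖ ≤ C)) := by
  classical
  have keyX : ∀ ν, ∃ h : C₀(X, ℂ), ∀ μ, Φ μ ν = μ h := by
    intro ν
    exact weakDual_continuous_functional_eq_eval
      { toFun := fun μ => Φ μ ν,
        map_add' := fun a b => hadd₁ a b ν,
        map_smul' := fun c a => by simpa using hsmul₁ c a ν } (hc₁ ν)
  have keyY : ∀ μ, ∃ g : C₀(Y, ℂ), ∀ ν, Φ μ ν = ν g := by
    intro μ
    exact weakDual_continuous_functional_eq_eval
      { toFun := Φ μ,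
        map_add' := hadd₂ μ,
        map_smul' := fun c a => by simpa using hsmul₂ c μ a } (hc₂ μ)
  have normdX : ∀ x, ‖WeakDual.toStrongDual (dX x)‖ ≤ 1 := by
    intro x
    refine ContinuousLinearMap.opNorm_le_bound _ zero_le_one fun g => ?_
    rw [one_mul, WeakDual.toStrongDual_apply, hdX]
    have h1 := BoundedContinuousFunction.norm_coe_le_norm g.toBCF x
    simpa [ZeroAtInftyContinuousMap.norm_toBCF_eq_norm] using h1
  have normdY : ∀ y, ‖WeakDual.toStrongDual (dY y)‖ ≤ 1 := by
    intro y
    refine ContinuousLinearMap.opNorm_le_bound _ zero_le_one fun g => ?_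
    rw [one_mul, WeakDual.toStrongDual_apply, hdY]
    have h1 := BoundedContinuousFunction.norm_coe_le_norm g.toBCF y
    simpa [ZeroAtInftyContinuousMap.norm_toBCF_eq_norm] using h1
  -- the backward direction of part 3, proved once
  have hback : ∀ C : ℝ, 0 ≤ C → (∀ p : X × Y, ‖Φ (dX p.1) (dY p.2)‖ ≤ C) →
      ∀ μ ν, ‖Φ μ ν‖ ≤ C * ‖WeakDual.toStrongDual μ‖ * ‖WeakDual.toStrongDual ν‖ := by
    intro C hC0 h μ ν
    obtain ⟨gμ, hgμ⟩ := keyY μ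
    have hb : ∀ y, ‖gμ y‖ ≤ C * ‖WeakDual.toStrongDual μ‖ := by
      intro y
      obtain ⟨hy, hhy⟩ := keyX (dY y)
      have h1 : gμ y = μ hy := by rw [← hdY y gμ, ← hgμ (dY y), hhy μ]
      have h2 : ‖hy‖ ≤ C := by
        rw [← ZeroAtInftyContinuousMap.norm_toBCF_eq_norm]
        refine (BoundedContinuousFunction.norm_le hC0).mpr fun x => ?_
        have h3 : hy x = Φ (dX x) (dY y) := by rw [← hdX x hy, ← hhy (dX x)]
        simpa [h3] using h (x, y)
      calc ‖gμ y‖ = ‖(WeakDual.toStrongDual μ) hy‖ := by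
            rw [h1, WeakDual.toStrongDual_apply]
        _ ≤ ‖WeakDual.toStrongDual μ‖ * ‖hy‖ := ContinuousLinearMap.le_opNorm _ _
        _ ≤ ‖WeakDual.toStrongDual μ‖ * C :=
            mul_le_mul_of_nonneg_left h2 (ContinuousLinearMap.opNorm_nonneg _)
        _ = C * ‖WeakDual.toStrongDual μ‖ := mul_comm _ _
    have hgb : ‖gμ‖ ≤ C * ‖WeakDual.toStrongDual μ‖ := by
      rw [← ZeroAtInftyContinuousMap.norm_toBCF_eq_norm]
      refine (BoundedContinuousFunction.norm_le
        (mul_nonneg hC0 (ContinuousLinearMap.opNorm_nonneg _))).mpr fun y => ?_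
      simpa using hb y
    calc ‖Φ μ ν‖ = ‖(WeakDual.toStrongDual ν) gμ‖ := by
          rw [hgμ ν, WeakDual.toStrongDual_apply]
      _ ≤ ‖WeakDual.toStrongDual ν‖ * ‖gμ‖ := ContinuousLinearMap.le_opNorm _ _
      _ ≤ ‖WeakDual.toStrongDual ν‖ * (C * ‖WeakDual.toStrongDual μ‖) :=
          mul_le_mul_of_nonneg_left hgb (ContinuousLinearMap.opNorm_nonneg _)
      _ = C * ‖WeakDual.toStrongDual μ‖ * ‖WeakDual.toStrongDual ν‖ := by ring
  refine ⟨⟨?_, ?_, ?_⟩, ?_, ?_⟩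
  · -- boundedness
    obtain ⟨C, hCb⟩ := hbdd
    refine ⟨max C 0, fun p => ?_⟩
    have h1 := hCb (dX p.1) (dY p.2)
    have h2 := normdX p.1
    have h3 := normdY p.2
    have h4 : (0:ℝ) ≤ ‖WeakDual.toStrongDual (dX p.1)‖ := ContinuousLinearMap.opNorm_nonneg _
    have h5 : (0:ℝ) ≤ ‖WeakDual.toStrongDual (dY p.2)‖ := ContinuousLinearMap.opNorm_nonneg _
    have h6 : C * ‖WeakDual.toStrongDual (dX p.1)‖ * ‖WeakDual.toStrongDual (dY p.2)‖ ≤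
        max C 0 * ‖WeakDual.toStrongDual (dX p.1)‖ * ‖WeakDual.toStrongDual (dY p.2)‖ :=
      mul_le_mul_of_nonneg_right (mul_le_mul_of_nonneg_right (le_max_left C 0) h4) h5
    have h7 : max C 0 * ‖WeakDual.toStrongDual (dX p.1)‖ ≤ max C 0 :=
      mul_le_of_le_one_right (le_max_right C 0) h2
    have h8 : max C 0 * ‖WeakDual.toStrongDual (dX p.1)‖ * ‖WeakDual.toStrongDual (dY p.2)‖ ≤
        max C 0 * ‖WeakDual.toStrongDual (dY p.2)‖ := mul_le_mul_of_nonneg_right h7 h5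
    have h9 : max C 0 * ‖WeakDual.toStrongDual (dY p.2)‖ ≤ max C 0 :=
      mul_le_of_le_one_right (le_max_right C 0) h3
    simpa using h1.trans (h6.trans (h8.trans h9))
  · -- slices in x
    intro x
    obtain ⟨g, hg⟩ := keyY (dX x)
    exact ⟨g, fun y => by rw [← hdY y g, ← hg (dY y)]⟩
  · -- slices in y
    intro y
    obtain ⟨h, hh⟩ := keyX (dY y)
    exact ⟨h, fun x => by rw [← hdX x h, ← hh (dX x)]⟩
  · -- iterated integral formula
    intro μ ν F g hF hg
    obtain ⟨gμ, hgμ⟩ := keyY μ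
    have hFy : ∀ y, Φ μ (dY y) = μ (F y) := by
      intro y
      obtain ⟨h, hh⟩ := keyX (dY y)
      have he : h = F y := by
        ext x
        rw [hF x y, ← hdX x h, ← hh (dX x)]
      rw [hh μ, he]
    have he : gμ = g := by
      ext y
      have h1 := hgμ (dY y)
      rw [hdY] at h1
      rw [← h1, hFy y, ← hg y]
    rw [hgμ ν, he]
  · -- norm equality
    intro C hC0
    constructor
    · intro h p
      have h1 := h (dX p.1) (dY p.2)
      have h2 := normdX p.1
      have h3 := normdY p.2
      have h4 : (0:ℝ) ≤ ‖WeakDual.toStrongDual (dX p.1)‖ := ContinuousLinearMap.opNorm_nonneg _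
      have h5 : (0:ℝ) ≤ ‖WeakDual.toStrongDual (dY p.2)‖ := ContinuousLinearMap.opNorm_nonneg _
      have h6 : C * ‖WeakDual.toStrongDual (dX p.1)‖ ≤ C := mul_le_of_le_one_right hC0 h2
      have h7 : C * ‖WeakDual.toStrongDual (dX p.1)‖ * ‖WeakDual.toStrongDual (dY p.2)‖ ≤
          C * ‖WeakDual.toStrongDual (dY p.2)‖ := mul_le_mul_of_nonneg_right h6 h5
      have h8 : C * ‖WeakDual.toStrongDual (dY p.2)‖ ≤ C := mul_le_of_le_one_right hC0 h3
      exact h1.trans (h7.trans h8)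
    · exact hback C hC0
end

section
/- Let G be a locally compact group and let Δ_* : C₀(G) → C_b(G × G) be given by (Δ_* f)(g,h) = f(gh). If G is not compact, then Δ_* C₀(G) ∩ C₀(G × G) = {0}. -/
open scoped ZeroAtInfty
open Filter

/-- Let `G` be a locally compact group which is not compact,
and let `Δ_* : C₀(G) → C_b(G × G)` be given by `(Δ_* f)(g, h) = f (g h)`.
Then `Δ_* C₀(G) ∩ C₀(G × G) = {0}`: if the function `(g, h) ↦ f (g h)`
vanishes at infinity on `G × G` for some `f ∈ C₀(G)`, then `f = 0`. -/
theorem comultiplication_range_inter_C0_eq_zero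
    (G : Type*) [Group G] [TopologicalSpace G] [IsTopologicalGroup G]
    [LocallyCompactSpace G] [T2Space G] (hG : ¬ CompactSpace G)
    (f : C₀(G, ℂ)) (F : C₀(G × G, ℂ)) (hF : ∀ g h : G, F (g, h) = f (g * h)) :
    f = 0 := by
  by_contra hf
  obtain ⟨x, hx⟩ : ∃ x, f x ≠ 0 := by
    by_contra h
    push_neg at h
    exact hf (DFunLike.ext _ _ fun g => h g)
  have h0 : Tendsto F (cocompact (G × G)) (nhds 0) := F.zero_at_infty'
  have hev : {p : G × G | ‖F p‖ < ‖f x‖} ∈ cocompact (G × G) := by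
    have hn : Tendsto (fun p => ‖F p‖) (cocompact (G × G)) (nhds 0) := by
      simpa [norm_zero] using h0.norm
    exact hn.eventually_lt_const (norm_pos_iff.mpr hx)
  obtain ⟨K, hK, hKsub⟩ := mem_cocompact.mp hev
  have hmem : ∀ g : G, (g, g⁻¹ * x) ∈ K := by
    intro g
    by_contra hg
    have := hKsub hg
    simp only [Set.mem_setOf_eq, hF g (g⁻¹ * x), mul_inv_cancel_left] at this
    exact lt_irrefl _ this
  have hsub : (Set.univ : Set G) ⊆ Prod.fst '' K := by
    intro g _
    exact ⟨(g, g⁻¹ * x), hmem g, rfl⟩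
  exact hG (isCompact_univ_iff.mp
    ((hK.image continuous_fst).of_isClosed_subset isClosed_univ hsub))
end
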